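/- In the setting of the previous matrix (rows 0..r given by evaluating power series p_0,...,p_n at x_0,...,x_r, lower rows constant in B): if the t-adic vanishing orders m_i = ord_t(p_i) satisfy m_0 > m_1 > ... > m_n, then the cofactor g with det(M) = g·∏_{i<j}(x_i − x_j) lies in the ideal of B[[x_0,...,x_r]] generated by the monomials of the specialized Schur polynomial σ_m(x_0,...,x_r,1,...,1), where m = (m_0,...,m_n). -/

import Mathlib

open MvPolynomial
open Classical

/-- The Schur polynomial in variables `x_0, …, x_n` associated to the Young
diagram `μ`, defined as a sum over semistandard fillings with entries in
`{0, …, n}`. -/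
noncomputable def schurPoly (n : ℕ) (μ : YoungDiagram) :
    MvPolynomial (Fin (n + 1)) ℤ :=
  ∑ T ∈ Finset.univ.filter
      (fun T : μ.cells → Fin (n + 1) =>
        (∀ c c' : μ.cells, (c : ℕ × ℕ).1 = (c' : ℕ × ℕ).1 →
          (c : ℕ × ℕ).2 ≤ (c' : ℕ × ℕ).2 → T c ≤ T c') ∧
        (∀ c c' : μ.cells, (c : ℕ × ℕ).2 = (c' : ℕ × ℕ).2 →
          (c : ℕ × ℕ).1 < (c' : ℕ × ℕ).1 → T c < T c')),
    ∏ c : μ.cells, X (T c)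

/-- Substitution of `1` for the variables of index `> r`. -/
noncomputable def specializeLast (n r : ℕ) :
    MvPolynomial (Fin (n + 1)) ℤ →ₐ[ℤ] MvPolynomial (Fin (r + 1)) ℤ :=
  aeval (fun i : Fin (n + 1) =>
    if h : (i : ℕ) < r + 1 then X ⟨(i : ℕ), h⟩ else 1)

/-- The multivariate power series `p(x_i)` obtained by substituting the single
variable `x_i` into a one-variable power series `p`. -/
noncomputable def evalAtVar {B : Type*} [CommRing B] {σ : Type*} [DecidableEq σ]
    (i : σ) (p : PowerSeries B) : MvPowerSeries σ B :=
  fun d : σ →₀ ℕ =>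
    if ∀ j : σ, j ≠ i → d j = 0 then PowerSeries.coeff (R := B) (d i) p else 0

set_option maxHeartbeats 1000000


section Part1

variable {B : Type*} [CommRing B] {τ : Type*} [DecidableEq τ]

lemma psX_eq (i : τ) : (MvPowerSeries.X i : MvPowerSeries τ B) = MvPowerSeries.monomial (R := B) (Finsupp.single i 1) 1 := rfl

lemma coeff_mul_XsubX (h : MvPowerSeries τ B) {i j : τ} (hij : i ≠ j) (e : τ →₀ ℕ) :
    MvPowerSeries.coeff (R := B) (e + Finsupp.single i 1) (h * (MvPowerSeries.X i - MvPowerSeries.X j)) =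
      MvPowerSeries.coeff (R := B) e h - (if e j = 0 then 0
        else MvPowerSeries.coeff (R := B) (e + Finsupp.single i 1 - Finsupp.single j 1) h) := by
  rw [mul_sub, map_sub]
  congr 1
  · rw [psX_eq, MvPowerSeries.coeff_add_mul_monomial, mul_one]
  · rw [psX_eq, MvPowerSeries.coeff_mul_monomial]
    by_cases hj : e j = 0
    · rw [if_pos hj, if_neg]
      intro hle
      have h1 := Finsupp.le_def.mp hle j
      simp [Finsupp.single_apply, hij, hij.symm, hj] at h1
    · rw [if_neg hj, if_pos, mul_one]
      rw [Finsupp.le_def]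
      intro a
      by_cases ha : a = j
      · subst ha
        simp [Finsupp.single_apply, hij.symm]
        omega
      · simp [Finsupp.single_apply, ha, Ne.symm ha]

lemma peel {W : Set (τ →₀ ℕ)} {i j : τ} (hij : i ≠ j) (h : MvPowerSeries τ B)
    (hW : ∀ e, MvPowerSeries.coeff (R := B) e (h * (MvPowerSeries.X i - MvPowerSeries.X j)) ≠ 0 → e ∈ W) :
    ∀ e, MvPowerSeries.coeff (R := B) e h ≠ 0 →
      ∃ k, ∃ f ∈ W, f + Finsupp.single j k = e + Finsupp.single i (k + 1) := by
  suffices H : ∀ N (e : τ →₀ ℕ), e j ≤ N → MvPowerSeries.coeff (R := B) e h ≠ 0 →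
      ∃ k, ∃ f ∈ W, f + Finsupp.single j k = e + Finsupp.single i (k + 1) by
    intro e he; exact H (e j) e le_rfl he
  intro N
  induction N with
  | zero =>
    intro e hej he
    have hej0 : e j = 0 := Nat.le_zero.mp hej
    have hc := coeff_mul_XsubX h hij e
    rw [if_pos hej0, sub_zero] at hc
    refine ⟨0, e + Finsupp.single i 1, hW _ (by rw [hc]; exact he), ?_⟩
    simp
  | succ N ih =>
    intro e hej he
    by_cases hF : MvPowerSeries.coeff (R := B) (e + Finsupp.single i 1) (h * (MvPowerSeries.X i - MvPowerSeries.X j)) ≠ 0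
    · refine ⟨0, e + Finsupp.single i 1, hW _ hF, ?_⟩
      simp
    · push_neg at hF
      by_cases hej0 : e j = 0
      · have hc := coeff_mul_XsubX h hij e
        rw [if_pos hej0, sub_zero] at hc
        exact absurd (hc ▸ hF) he
      · have hc := coeff_mul_XsubX h hij e
        rw [if_neg hej0, hF] at hc
        set e' := e + Finsupp.single i 1 - Finsupp.single j 1 with he'
        have hce' : MvPowerSeries.coeff (R := B) e' h ≠ 0 := by
          intro h0; rw [h0, sub_zero] at hc; exact he hc.symm
        have he'j : e' j ≤ N := by
          have : e' j = e j - 1 := by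
            simp [he', Finsupp.single_apply, hij, hij.symm]
          omega
        obtain ⟨k, f, hf, heq⟩ := ih e' he'j hce'
        refine ⟨k + 1, f, hf, ?_⟩
        have hsle : Finsupp.single j 1 ≤ e + Finsupp.single i 1 := by
          rw [Finsupp.le_def]
          intro a
          by_cases ha : a = j
          · subst ha; simp [Finsupp.single_apply, hij.symm]; omega
          · simp [Finsupp.single_apply, ha, Ne.symm ha]
        have hkey : e' + Finsupp.single j 1 = e + Finsupp.single i 1 :=
          tsub_add_cancel_of_le hsle
        calc f + Finsupp.single j (k + 1 : ℕ)
            = f + Finsupp.single j k + Finsupp.single j 1 := by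
              rw [add_assoc, ← Finsupp.single_add]
          _ = e' + Finsupp.single i (k + 1) + Finsupp.single j 1 := by rw [heq]
          _ = e' + Finsupp.single j 1 + Finsupp.single i (k + 1) := by abel
          _ = e + Finsupp.single i 1 + Finsupp.single i (k + 1) := by rw [hkey]
          _ = e + Finsupp.single i (k + 1 + 1) := by
              rw [add_assoc, ← Finsupp.single_add]
              congr 2
              omega

lemma mulXsubX_eq_zero {i j : τ} (hij : i ≠ j) (h : MvPowerSeries τ B)
    (h0 : h * (MvPowerSeries.X i - MvPowerSeries.X j) = 0) : h = 0 := by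
  ext e
  rw [map_zero]
  by_contra he
  obtain ⟨k, f, hf, -⟩ := peel (W := (∅ : Set (τ →₀ ℕ))) hij h
    (fun e' he' => absurd (by rw [h0, map_zero]) he') e he
  exact hf

lemma mul_prod_XsubX_eq_zero {ι : Type*} (s : Finset ι) (a b : ι → τ)
    (hab : ∀ q ∈ s, a q ≠ b q) :
    ∀ c : MvPowerSeries τ B, c * ∏ q ∈ s, (MvPowerSeries.X (a q) - MvPowerSeries.X (b q)) = 0 → c = 0 := by
  classical
  induction s using Finset.induction_on with
  | empty => intro c hc; simpa using hc
  | @insert q s hq ih =>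
    intro c hc
    rw [Finset.prod_insert hq, ← mul_assoc] at hc
    exact mulXsubX_eq_zero (hab q (Finset.mem_insert_self q s))
      c (ih (fun x hx => hab x (Finset.mem_insert_of_mem hx)) _ hc)

lemma prod_XsubX_cancel {ι : Type*} (s : Finset ι) (a b : ι → τ)
    (hab : ∀ q ∈ s, a q ≠ b q) {c d : MvPowerSeries τ B}
    (h : c * ∏ q ∈ s, (MvPowerSeries.X (a q) - MvPowerSeries.X (b q)) = d * ∏ q ∈ s, (MvPowerSeries.X (a q) - MvPowerSeries.X (b q))) : c = d := by
  have := mul_prod_XsubX_eq_zero s a b hab (c - d) (by rw [sub_mul, h, sub_self])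
  linear_combination (norm := abel) this

lemma mem_span_of_supp_dominated {σ' : Type*} (S : Finset (σ' →₀ ℕ)) (g : MvPowerSeries σ' B)
    (hdom : ∀ e, MvPowerSeries.coeff (R := B) e g ≠ 0 → ∃ d ∈ S, d ≤ e) :
    g ∈ Ideal.span {x : MvPowerSeries σ' B | ∃ d ∈ S, x = MvPowerSeries.monomial (R := B) d 1} := by
  classical
  have hdom' : ∀ e, ∃ d, (MvPowerSeries.coeff (R := B) e g ≠ 0 → d ∈ S ∧ d ≤ e) := by
    intro e
    by_cases he : MvPowerSeries.coeff (R := B) e g ≠ 0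
    · obtain ⟨d, hd, hde⟩ := hdom e he
      exact ⟨d, fun _ => ⟨hd, hde⟩⟩
    · exact ⟨0, fun h => absurd h he⟩
  choose ch hch using hdom'
  set q : (σ' →₀ ℕ) → MvPowerSeries σ' B := fun d =>
    fun y => if ch (d + y) = d ∧ MvPowerSeries.coeff (R := B) (d + y) g ≠ 0 then MvPowerSeries.coeff (R := B) (d + y) g else 0 with hq
  have hg : g = ∑ d ∈ S, MvPowerSeries.monomial (R := B) d 1 * q d := by
    ext e
    rw [map_sum]
    have hterm : ∀ d ∈ S, MvPowerSeries.coeff (R := B) e (MvPowerSeries.monomial (R := B) d 1 * q d)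
        = if d ≤ e ∧ ch e = d ∧ MvPowerSeries.coeff (R := B) e g ≠ 0 then MvPowerSeries.coeff (R := B) e g else 0 := by
      intro d _
      rw [MvPowerSeries.coeff_monomial_mul]
      by_cases hde : d ≤ e
      · rw [if_pos hde, one_mul]
        have : MvPowerSeries.coeff (R := B) (e - d) (q d) = q d (e - d) := rfl
        rw [this, hq]
        simp only [add_tsub_cancel_of_le hde]
        by_cases h1 : ch e = d ∧ MvPowerSeries.coeff (R := B) e g ≠ 0
        · rw [if_pos h1, if_pos ⟨hde, h1⟩]
        · rw [if_neg h1, if_neg (by tauto)]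
      · rw [if_neg hde, if_neg (by tauto)]
    rw [Finset.sum_congr rfl hterm]
    by_cases he : MvPowerSeries.coeff (R := B) e g ≠ 0
    · rw [Finset.sum_eq_single (ch e)]
      · rw [if_pos ⟨(hch e he).2, rfl, he⟩]
      · intro d _ hd
        rw [if_neg (by tauto)]
      · intro h
        exact absurd ((hch e he).1) h
    · push_neg at he
      rw [he]
      symm; apply Finset.sum_eq_zero
      intro d _
      rw [if_neg (by tauto)]
  rw [hg]
  apply Ideal.sum_mem
  intro d hd
  exact Ideal.mul_mem_right _ _ (Ideal.subset_span ⟨d, hd, rfl⟩)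

lemma prod_X_pow_eq_monomialPS {σ' : Type*} [Fintype σ'] [DecidableEq σ'] (d : σ' →₀ ℕ) :
    (∏ i : σ', (MvPowerSeries.X i : MvPowerSeries σ' B) ^ d i) = MvPowerSeries.monomial (R := B) d 1 := by
  have hpoly : (∏ i : σ', (MvPolynomial.X i : MvPolynomial σ' B) ^ d i)
      = MvPolynomial.monomial d 1 := by
    rw [← MvPolynomial.prod_X_pow_eq_monomial]
    apply (Finset.prod_subset (Finset.subset_univ d.support) ?_).symm
    intro x _ hx
    simp [Finsupp.notMem_support_iff.mp hx]
  have := congrArg (MvPolynomial.coeToMvPowerSeries.ringHom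
    (σ := σ') (R := B)) hpoly
  rw [map_prod] at this
  simpa using this

end Part1


section Part2

variable {B : Type*} [CommRing B] {τ : Type*} [DecidableEq τ]

/-- exponent permutation -/
noncomputable def expMap (ρ : Equiv.Perm τ) : (τ →₀ ℕ) ≃+ (τ →₀ ℕ) := Finsupp.domCongr ρ

lemma expMap_symm (ρ : Equiv.Perm τ) (d : τ →₀ ℕ) :
    (expMap ρ).symm d = Finsupp.equivMapDomain ρ.symm d := rfl

lemma expMap_apply (ρ : Equiv.Perm τ) (d : τ →₀ ℕ) :
    expMap ρ d = Finsupp.equivMapDomain ρ d := rfl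

lemma expMap_symm_eq_zero_iff (ρ : Equiv.Perm τ) (d : τ →₀ ℕ) :
    (expMap ρ).symm d = 0 ↔ d = 0 := by
  constructor
  · intro h
    have := congrArg (expMap ρ) h
    rwa [AddEquiv.apply_symm_apply, map_zero] at this
  · intro h; rw [h, map_zero]

lemma expMap_symm_apply_coord (ρ : Equiv.Perm τ) (d : τ →₀ ℕ) (y : τ) :
    ((expMap ρ).symm d) y = d (ρ y) := by
  rw [expMap_symm, Finsupp.equivMapDomain_apply]
  simp

noncomputable def psRenameFun (ρ : Equiv.Perm τ) (f : MvPowerSeries τ B) : MvPowerSeries τ B :=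
  fun d => f ((expMap ρ).symm d)

lemma psRenameFun_coeff (ρ : Equiv.Perm τ) (f : MvPowerSeries τ B) (d : τ →₀ ℕ) :
    MvPowerSeries.coeff (R := B) d (psRenameFun ρ f) = MvPowerSeries.coeff (R := B) ((expMap ρ).symm d) f := rfl

/-- Renaming the variables of a multivariate power series along a permutation. -/
noncomputable def psRename (ρ : Equiv.Perm τ) : MvPowerSeries τ B →+* MvPowerSeries τ B where
  toFun := psRenameFun ρ
  map_one' := by
    apply MvPowerSeries.ext
    intro d
    rw [psRenameFun_coeff, MvPowerSeries.coeff_one, MvPowerSeries.coeff_one]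
    simp only [expMap_symm_eq_zero_iff]
  map_mul' f g := by
    apply MvPowerSeries.ext
    intro d
    rw [psRenameFun_coeff, MvPowerSeries.coeff_mul, MvPowerSeries.coeff_mul]
    refine Finset.sum_nbij' (fun p => (expMap ρ p.1, expMap ρ p.2))
      (fun p => ((expMap ρ).symm p.1, (expMap ρ).symm p.2)) ?_ ?_ ?_ ?_ ?_
    · intro p hp
      rw [Finset.HasAntidiagonal.mem_antidiagonal] at hp ⊢
      rw [← map_add, hp, AddEquiv.apply_symm_apply]
    · intro p hp
      rw [Finset.HasAntidiagonal.mem_antidiagonal] at hp ⊢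
      rw [← map_add, hp]
    · intro p _; simp
    · intro p _; simp
    · intro p _
      rw [psRenameFun_coeff, psRenameFun_coeff, AddEquiv.symm_apply_apply,
        AddEquiv.symm_apply_apply]
  map_zero' := by funext d; rfl
  map_add' f g := by funext d; rfl

lemma psRename_coeff (ρ : Equiv.Perm τ) (f : MvPowerSeries τ B) (d : τ →₀ ℕ) :
    MvPowerSeries.coeff (R := B) d (psRename ρ f) = MvPowerSeries.coeff (R := B) ((expMap ρ).symm d) f := rfl

lemma psRename_psRename (ρ ν : Equiv.Perm τ) (f : MvPowerSeries τ B) :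
    psRename ρ (psRename ν f) = psRename (ρ * ν) f := by
  ext d
  rw [psRename_coeff, psRename_coeff, psRename_coeff]
  congr 1
  rw [expMap_symm, expMap_symm, expMap_symm]
  have : (ρ * ν : Equiv.Perm τ).symm = ρ.symm.trans ν.symm := rfl
  rw [this, Finsupp.equivMapDomain_trans]

lemma psRename_one (f : MvPowerSeries τ B) : psRename 1 f = f := by
  ext d
  rw [psRename_coeff]
  congr 1
  rw [expMap_symm]
  have : (1 : Equiv.Perm τ).symm = Equiv.refl τ := rfl
  rw [this, Finsupp.equivMapDomain_refl]

lemma psRename_C (ρ : Equiv.Perm τ) (b : B) :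
    psRename ρ (MvPowerSeries.C (σ := τ) (R := B) b) = MvPowerSeries.C (σ := τ) (R := B) b := by
  ext d
  rw [psRename_coeff, MvPowerSeries.coeff_C, MvPowerSeries.coeff_C]
  simp only [expMap_symm_eq_zero_iff]

lemma psRename_evalAtVar (ρ : Equiv.Perm τ) (x : τ) (q : PowerSeries B) :
    psRename ρ (evalAtVar x q) = evalAtVar (ρ x) q := by
  ext d
  rw [psRename_coeff]
  show (evalAtVar x q) ((expMap ρ).symm d) = (evalAtVar (ρ x) q) d
  unfold evalAtVar
  have hcond : (∀ y : τ, y ≠ x → ((expMap ρ).symm d) y = 0) ↔ (∀ z : τ, z ≠ ρ x → d z = 0) := by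
    constructor
    · intro h z hz
      have hy : ρ.symm z ≠ x := by
        intro hc
        exact hz (by rw [← hc, Equiv.apply_symm_apply])
      have := h (ρ.symm z) hy
      rwa [expMap_symm_apply_coord, Equiv.apply_symm_apply] at this
    · intro h y hy
      rw [expMap_symm_apply_coord]
      exact h (ρ y) (fun hc => hy (ρ.injective hc))
  by_cases h : ∀ y : τ, y ≠ x → ((expMap ρ).symm d) y = 0
  · rw [if_pos h, if_pos (hcond.mp h), expMap_symm_apply_coord]
  · rw [if_neg h, if_neg (fun hc => h (hcond.mpr hc))]

lemma psRename_X (ρ : Equiv.Perm τ) (x : τ) :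
    psRename ρ (MvPowerSeries.X x) = (MvPowerSeries.X (ρ x) : MvPowerSeries τ B) := by
  ext d
  rw [psRename_coeff, MvPowerSeries.coeff_X, MvPowerSeries.coeff_X]
  have : (expMap ρ).symm d = Finsupp.single x 1 ↔ d = Finsupp.single (ρ x) 1 := by
    constructor
    · intro h
      have := congrArg (expMap ρ) h
      rwa [AddEquiv.apply_symm_apply, expMap_apply, Finsupp.equivMapDomain_single] at this
    · intro h
      rw [h, expMap_symm, Finsupp.equivMapDomain_single, Equiv.symm_apply_apply]
  simp only [this]

end Part2


section Part3

variable {B : Type*} [CommRing B]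

lemma coeff_evalAtVar {σ : Type*} [DecidableEq σ] (x : σ) (q : PowerSeries B) (d : σ →₀ ℕ) :
    MvPowerSeries.coeff (R := B) d (evalAtVar x q) =
      if ∀ y : σ, y ≠ x → d y = 0 then PowerSeries.coeff (R := B) (d x) q else 0 := rfl

lemma sum_single_univ {q : ℕ} (e : Fin q →₀ ℕ) :
    ∑ x : Fin q, Finsupp.single x (e x) = e := by
  ext a
  rw [Finsupp.finset_sum_apply]
  simp [Finsupp.single_apply, Finset.sum_ite_eq]

/-- The coefficient matrix. -/
noncomputable def Nmat (n r : ℕ) (p : Fin (n + 1) → PowerSeries B)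
    (M : Matrix (Fin (n + 1)) (Fin (n + 1)) (MvPowerSeries (Fin (r + 1)) B))
    (e : Fin (r + 1) →₀ ℕ) : Matrix (Fin (n + 1)) (Fin (n + 1)) B :=
  fun k l => if h : (k : ℕ) < r + 1 then PowerSeries.coeff (R := B) (e ⟨(k : ℕ), h⟩) (p l)
             else MvPowerSeries.constantCoeff (σ := Fin (r + 1)) (R := B) (M k l)

lemma coeff_det (n r : ℕ) (hr : r ≤ n) (p : Fin (n + 1) → PowerSeries B)
    (M : Matrix (Fin (n + 1)) (Fin (n + 1)) (MvPowerSeries (Fin (r + 1)) B))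
    (hrows : ∀ i : Fin (n + 1), ∀ h : (i : ℕ) < r + 1, ∀ j : Fin (n + 1),
      M i j = evalAtVar (⟨(i : ℕ), h⟩ : Fin (r + 1)) (p j))
    (hconst : ∀ i : Fin (n + 1), r + 1 ≤ (i : ℕ) → ∀ j : Fin (n + 1),
      ∃ b : B, M i j = MvPowerSeries.C (σ := Fin (r + 1)) (R := B) b)
    (e : Fin (r + 1) →₀ ℕ) :
    MvPowerSeries.coeff (R := B) e M.det = (Nmat n r p M e).det := by
  classical
  have hcast : r + 1 ≤ n + 1 := by omega
  rw [Matrix.det_apply, Matrix.det_apply, map_sum]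
  apply Finset.sum_congr rfl
  intro σ _
  have hsmul : ∀ (z : MvPowerSeries (Fin (r + 1)) B),
      MvPowerSeries.coeff (R := B) e (Equiv.Perm.sign σ • z)
      = Equiv.Perm.sign σ • MvPowerSeries.coeff (R := B) e z := by
    intro z
    rcases Int.units_eq_one_or (Equiv.Perm.sign σ) with h | h <;> simp [h]
  rw [hsmul]
  congr 1
  rw [MvPowerSeries.coeff_prod]
  set key : Fin (r + 1) → Fin (n + 1) := fun x => σ⁻¹ (Fin.castLE hcast x) with hkey
  have hkeyinj : Function.Injective key := by
    intro a b hab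
    have := σ⁻¹.injective hab
    exact Fin.castLE_injective hcast this
  set l₀ : (Fin (n + 1)) →₀ ((Fin (r + 1)) →₀ ℕ) :=
    ∑ x : Fin (r + 1), Finsupp.single (key x) (Finsupp.single x (e x)) with hl₀
  have hl₀key : ∀ x : Fin (r + 1), l₀ (key x) = Finsupp.single x (e x) := by
    intro x
    rw [hl₀, Finsupp.finset_sum_apply]
    rw [Finset.sum_eq_single x]
    · simp
    · intro y _ hyx
      exact Finsupp.single_eq_of_ne (fun hc => hyx (hkeyinj hc.symm))
    · simp
  have hl₀big : ∀ k : Fin (n + 1), ¬ ((σ k : ℕ) < r + 1) → l₀ k = 0 := by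
    intro k hk
    rw [hl₀, Finsupp.finset_sum_apply]
    apply Finset.sum_eq_zero
    intro x _
    apply Finsupp.single_eq_of_ne
    intro hc
    apply hk
    have : σ (key x) = Fin.castLE hcast x := by
      rw [hkey]; simp
    rw [← hc] at this
    rw [this]
    simp only [Fin.coe_castLE]
    exact x.isLt
  have hl₀small : ∀ (k : Fin (n + 1)) (h : (σ k : ℕ) < r + 1),
      l₀ k = Finsupp.single (⟨(σ k : ℕ), h⟩ : Fin (r + 1)) (e ⟨(σ k : ℕ), h⟩) := by
    intro k h
    have hk : k = key ⟨(σ k : ℕ), h⟩ := by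
      rw [hkey]
      simp only
      rw [show Fin.castLE hcast (⟨(σ k : ℕ), h⟩ : Fin (r + 1)) = σ k from Fin.ext rfl]
      simp
    have := hl₀key ⟨(σ k : ℕ), h⟩
    rwa [← hk] at this
  have hmem : l₀ ∈ Finset.finsuppAntidiag Finset.univ e := by
    rw [Finset.mem_finsuppAntidiag]
    constructor
    · rw [hl₀]
      rw [show (Finset.univ.sum fun k => (∑ x : Fin (r+1), Finsupp.single (key x)
          (Finsupp.single x (e x))) k) = ∑ x : Fin (r+1), (Finset.univ.sum fun k =>
            (Finsupp.single (key x) (Finsupp.single x (e x))) k) from ?_]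
      · rw [Finset.sum_congr rfl (fun x _ => ?_), sum_single_univ]
        rw [Finset.sum_eq_single (key x)]
        · simp
        · intro y _ hy; exact Finsupp.single_eq_of_ne hy
        · simp
      · rw [← Finset.sum_comm]
        apply Finset.sum_congr rfl
        intro k _
        rw [Finsupp.finset_sum_apply]
    · exact Finset.subset_univ _
  rw [Finset.sum_eq_single l₀]
  · apply Finset.prod_congr rfl
    intro i _
    by_cases h : (σ i : ℕ) < r + 1
    · rw [hl₀small i h, hrows (σ i) h i, coeff_evalAtVar]
      rw [if_pos]
      · rw [Finsupp.single_eq_same]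
        simp only [Nmat]
        rw [dif_pos h]
      · intro y hy
        exact Finsupp.single_eq_of_ne hy
    · rw [hl₀big i h]
      simp only [Nmat]
      rw [dif_neg h, ← MvPowerSeries.coeff_zero_eq_constantCoeff_apply]
  · intro l hl hlne
    by_contra hne0
    have hfac : ∀ i : Fin (n + 1),
        MvPowerSeries.coeff (R := B) (l i) (M (σ i) i) ≠ 0 := by
      intro i hi
      exact hne0 (Finset.prod_eq_zero (Finset.mem_univ i) hi)
    have hform : ∀ i : Fin (n + 1),
        (∀ h : (σ i : ℕ) < r + 1, l i = Finsupp.single (⟨(σ i : ℕ), h⟩ : Fin (r+1))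
          (l i ⟨(σ i : ℕ), h⟩)) ∧ (¬ ((σ i : ℕ) < r + 1) → l i = 0) := by
      intro i
      constructor
      · intro h
        have := hfac i
        rw [hrows (σ i) h i, coeff_evalAtVar] at this
        by_cases hcnd : ∀ y : Fin (r+1), y ≠ ⟨(σ i : ℕ), h⟩ → (l i) y = 0
        · ext y
          by_cases hy : y = ⟨(σ i : ℕ), h⟩
          · subst hy; simp
          · rw [hcnd y hy, Finsupp.single_eq_of_ne hy]
        · exact absurd (if_neg hcnd) (fun hc => this (by rw [hc]))
      · intro h
        obtain ⟨b, hb⟩ := hconst (σ i) (by omega) i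
        have := hfac i
        rw [hb, MvPowerSeries.coeff_C] at this
        by_contra hzero
        exact this (if_neg hzero)
    apply hlne
    have hsum : Finset.univ.sum (⇑l) = e := (Finset.mem_finsuppAntidiag.mp hl).1
    ext k y
    by_cases h : (σ k : ℕ) < r + 1
    · rw [hl₀small k h, (hform k).1 h]
      by_cases hy : y = (⟨(σ k : ℕ), h⟩ : Fin (r+1))
      · subst hy
        rw [Finsupp.single_eq_same, Finsupp.single_eq_same]
        -- l k x = e x where x = ⟨σ k, h⟩
        have := congrArg (fun (f : Fin (r+1) →₀ ℕ) => f ⟨(σ k : ℕ), h⟩) hsum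
        rw [← this, Finsupp.finset_sum_apply, Finset.sum_eq_single k]
        · intro i _ hik
          by_cases hsi : (σ i : ℕ) < r + 1
          · rw [(hform i).1 hsi]
            apply Finsupp.single_eq_of_ne
            intro hc
            have : σ i = σ k := by
              apply Fin.ext
              simpa using (congrArg Fin.val hc).symm
            exact hik (σ.injective this)
          · rw [(hform i).2 hsi]; rfl
        · simp
      · rw [Finsupp.single_eq_of_ne hy, Finsupp.single_eq_of_ne hy]
    · rw [hl₀big k h, (hform k).2 h]
  · intro h
    exact absurd hmem h

def U0set (n r : ℕ) (m : Fin (n + 1) → ℕ) : Set (Fin (r + 1) →₀ ℕ) :=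
  {f | Function.Injective (fun x : Fin (r + 1) => f x) ∧
    ∃ em : Fin (r + 1) → Fin (n + 1), Function.Injective em ∧ ∀ x, m (em x) ≤ f x}

lemma detM_supp (n r : ℕ) (hr : r ≤ n) (p : Fin (n + 1) → PowerSeries B)
    (M : Matrix (Fin (n + 1)) (Fin (n + 1)) (MvPowerSeries (Fin (r + 1)) B))
    (hrows : ∀ i : Fin (n + 1), ∀ h : (i : ℕ) < r + 1, ∀ j : Fin (n + 1),
      M i j = evalAtVar (⟨(i : ℕ), h⟩ : Fin (r + 1)) (p j))
    (hconst : ∀ i : Fin (n + 1), r + 1 ≤ (i : ℕ) → ∀ j : Fin (n + 1),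
      ∃ b : B, M i j = MvPowerSeries.C (σ := Fin (r + 1)) (R := B) b)
    (m : Fin (n + 1) → ℕ)
    (hord : ∀ i : Fin (n + 1), (p i).order = (m i : ℕ∞)) :
    ∀ e, MvPowerSeries.coeff (R := B) e M.det ≠ 0 → e ∈ U0set n r m := by
  have hcast : r + 1 ≤ n + 1 := by omega
  intro e he
  rw [coeff_det n r hr p M hrows hconst e] at he
  have hidx : ∀ x : Fin (r + 1), (⟨((Fin.castLE hcast x) : ℕ),
      by simp only [Fin.coe_castLE]; exact x.isLt⟩ : Fin (r + 1)) = x := by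
    intro x; apply Fin.ext; simp
  constructor
  · intro x x' hxx'
    by_contra hne
    apply he
    apply Matrix.det_zero_of_row_eq (M := Nmat n r p M e)
      (i := Fin.castLE hcast x) (j := Fin.castLE hcast x')
    · intro hc; exact hne (Fin.castLE_injective _ hc)
    · funext l
      simp only [Nmat]
      rw [dif_pos (show ((Fin.castLE hcast x : Fin (n+1)) : ℕ) < r + 1 by
        simp only [Fin.coe_castLE]; exact x.isLt)]
      rw [dif_pos (show ((Fin.castLE hcast x' : Fin (n+1)) : ℕ) < r + 1 by
        simp only [Fin.coe_castLE]; exact x'.isLt)]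
      rw [hidx x, hidx x']
      rw [show e x = e x' from hxx']
  · rw [Matrix.det_apply] at he
    obtain ⟨σ, -, hσ⟩ := Finset.exists_ne_zero_of_sum_ne_zero he
    have hprod : ∏ i, Nmat n r p M e (σ i) i ≠ 0 := by
      intro h0; apply hσ; rw [h0, smul_zero]
    refine ⟨fun x => σ⁻¹ (Fin.castLE hcast x), ?_, ?_⟩
    · intro a b hab; exact Fin.castLE_injective _ (σ⁻¹.injective hab)
    · intro x
      set i := σ⁻¹ (Fin.castLE hcast x) with hi
      have hfac : Nmat n r p M e (σ i) i ≠ 0 :=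
        fun h0 => hprod (Finset.prod_eq_zero (Finset.mem_univ i) h0)
      have hσi : σ i = Fin.castLE hcast x := by rw [hi]; simp
      rw [hσi] at hfac
      simp only [Nmat] at hfac
      rw [dif_pos (show ((Fin.castLE hcast x : Fin (n+1)) : ℕ) < r + 1 by
        simp only [Fin.coe_castLE]; exact x.isLt)] at hfac
      rw [hidx x] at hfac
      by_contra hlt
      push_neg at hlt
      apply hfac
      apply PowerSeries.coeff_of_lt_order
      rw [hord i]
      exact_mod_cast hlt

end Part3


section Part4
variable {B : Type*} [CommRing B]

lemma V_as_sigma (r : ℕ) :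
    (∏ i : Fin (r + 1), ∏ j ∈ Finset.Ioi i,
      (MvPowerSeries.X i - MvPowerSeries.X j : MvPowerSeries (Fin (r + 1)) B))
    = ∏ q ∈ (Finset.univ.sigma fun i : Fin (r + 1) => Finset.Ioi i),
        (MvPowerSeries.X q.1 - MvPowerSeries.X q.2) := by
  rw [Finset.prod_sigma]

lemma psRename_detVand (r : ℕ) (ρ : Equiv.Perm (Fin (r + 1))) :
    psRename ρ (Matrix.vandermonde fun t => (MvPowerSeries.X t : MvPowerSeries (Fin (r+1)) B)).det
      = (Equiv.Perm.sign ρ : ℤ) * (Matrix.vandermonde fun t =>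
          (MvPowerSeries.X t : MvPowerSeries (Fin (r+1)) B)).det := by
  rw [RingHom.map_det]
  have : (psRename ρ).mapMatrix (Matrix.vandermonde fun t =>
      (MvPowerSeries.X t : MvPowerSeries (Fin (r+1)) B))
      = (Matrix.vandermonde fun t => (MvPowerSeries.X t : MvPowerSeries (Fin (r+1)) B)).submatrix
        ρ id := by
    ext k l
    simp only [RingHom.mapMatrix_apply, Matrix.map_apply, Matrix.vandermonde_apply,
      Matrix.submatrix_apply, id]
    rw [map_pow, psRename_X]
  rw [this, Matrix.det_permute]

lemma V_eq_c_mul_detVand (r : ℕ) :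
    ∃ c : MvPowerSeries (Fin (r+1)) B, (c * c = 1) ∧ (psRename (B := B) · c) = (fun _ => c) ∧
    (∏ i : Fin (r + 1), ∏ j ∈ Finset.Ioi i,
      (MvPowerSeries.X i - MvPowerSeries.X j : MvPowerSeries (Fin (r + 1)) B))
      = c * (Matrix.vandermonde fun t => (MvPowerSeries.X t : MvPowerSeries (Fin (r+1)) B)).det := by
  refine ⟨∏ i : Fin (r+1), (-1 : MvPowerSeries (Fin (r+1)) B) ^ (Finset.Ioi i).card, ?_, ?_, ?_⟩
  · rw [← Finset.prod_mul_distrib]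
    apply Finset.prod_eq_one
    intro i _
    rw [← pow_add, ← two_mul, pow_mul]
    simp
  · funext ρ
    rw [map_prod]
    apply Finset.prod_congr rfl
    intro i _
    rw [map_pow, map_neg, map_one]
  · rw [Matrix.det_vandermonde, ← Finset.prod_mul_distrib]
    apply Finset.prod_congr rfl
    intro i _
    rw [← Finset.prod_const, ← Finset.prod_mul_distrib]
    apply Finset.prod_congr rfl
    intro j _
    ring

lemma g_symm (n r : ℕ) (hr : r ≤ n) (p : Fin (n + 1) → PowerSeries B)
    (M : Matrix (Fin (n + 1)) (Fin (n + 1)) (MvPowerSeries (Fin (r + 1)) B))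
    (hrows : ∀ i : Fin (n + 1), ∀ h : (i : ℕ) < r + 1, ∀ j : Fin (n + 1),
      M i j = evalAtVar (⟨(i : ℕ), h⟩ : Fin (r + 1)) (p j))
    (hconst : ∀ i : Fin (n + 1), r + 1 ≤ (i : ℕ) → ∀ j : Fin (n + 1),
      ∃ b : B, M i j = MvPowerSeries.C (σ := Fin (r + 1)) (R := B) b)
    (g : MvPowerSeries (Fin (r + 1)) B)
    (hg : M.det = g * ∏ i : Fin (r + 1), ∏ j ∈ Finset.Ioi i,
      (MvPowerSeries.X i - MvPowerSeries.X j)) :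
    ∀ ρ : Equiv.Perm (Fin (r + 1)), psRename ρ g = g := by
  have hcast : r + 1 ≤ n + 1 := by omega
  set V : MvPowerSeries (Fin (r + 1)) B := ∏ i : Fin (r + 1), ∏ j ∈ Finset.Ioi i,
      (MvPowerSeries.X i - MvPowerSeries.X j) with hV
  have hcancel : ∀ c d : MvPowerSeries (Fin (r+1)) B, c * V = d * V → c = d := by
    intro c d hcd
    rw [hV, V_as_sigma] at hcd
    exact prod_XsubX_cancel _ _ _ (fun q hq => by
      rw [Finset.mem_sigma] at hq
      exact Fin.ne_of_lt (Finset.mem_Ioi.mp hq.2)) hcd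
  -- swaps
  have hswap : ∀ a b : Fin (r + 1), a ≠ b → psRename (Equiv.swap a b) g = g := by
    intro a b hab
    set ρ := Equiv.swap a b with hρ
    set τ : Equiv.Perm (Fin (n + 1)) :=
      Equiv.swap (Fin.castLE hcast a) (Fin.castLE hcast b) with hτ
    -- renaming the matrix permutes rows
    have hmap : (psRename ρ).mapMatrix M = M.submatrix τ id := by
      ext k l
      simp only [RingHom.mapMatrix_apply, Matrix.map_apply, Matrix.submatrix_apply, id]
      by_cases hk : (k : ℕ) < r + 1
      · rw [hrows k hk l, psRename_evalAtVar]
        have hkeq : k = Fin.castLE hcast (⟨(k : ℕ), hk⟩ : Fin (r + 1)) := Fin.ext rfl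
        have hτk : τ k = Fin.castLE hcast (ρ ⟨(k : ℕ), hk⟩) := by
          show Equiv.swap (Fin.castLE hcast a) (Fin.castLE hcast b) k = _
          conv_lhs => rw [hkeq]
          exact Function.Injective.swap_apply (Fin.castLE_injective hcast) a b _
        have hτklt : ((τ k : Fin (n+1)) : ℕ) < r + 1 := by
          rw [hτk]; simp only [Fin.coe_castLE]; exact (ρ ⟨(k : ℕ), hk⟩).isLt
        rw [hrows (τ k) hτklt l]
        have hidx : (⟨((τ k : Fin (n+1)) : ℕ), hτklt⟩ : Fin (r+1)) = ρ ⟨(k : ℕ), hk⟩ := by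
          apply Fin.ext
          show ((τ k : Fin (n+1)) : ℕ) = _
          rw [hτk]
          simp
        rw [hidx]
      · obtain ⟨bb, hbb⟩ := hconst k (by omega) l
        have hτk : τ k = k := by
          rw [hτ]
          apply Equiv.swap_apply_of_ne_of_ne
          · intro hc; rw [hc] at hk; exact hk (by simp only [Fin.coe_castLE]; exact a.isLt)
          · intro hc; rw [hc] at hk; exact hk (by simp only [Fin.coe_castLE]; exact b.isLt)
        rw [hbb, psRename_C, hτk, hbb]
    have hdet : psRename ρ M.det = - M.det := by
      rw [RingHom.map_det, hmap, Matrix.det_permute, hτ,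
        Equiv.Perm.sign_swap (fun hc => hab (Fin.castLE_injective hcast hc))]
      push_cast
      ring
    obtain ⟨c, hc1, hc2, hc3⟩ := V_eq_c_mul_detVand (B := B) r
    have hrenc : psRename ρ c = c := congrFun hc2 ρ
    have hrenV : psRename ρ V = - V := by
      rw [hV, hc3, map_mul, hrenc, psRename_detVand, hρ, Equiv.Perm.sign_swap hab]
      push_cast
      ring
    have := congrArg (psRename ρ) hg
    rw [hdet, map_mul, hrenV] at this
    -- - det M = ren g * (- V)
    have hthis : M.det = psRename ρ g * V := by
      have := congrArg Neg.neg this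
      rw [neg_neg, mul_neg, neg_neg] at this
      exact this
    apply hcancel
    rw [← hthis, hg]
  intro ρ
  refine Equiv.Perm.swap_induction_on ρ (psRename_one g) ?_
  intro f x y hxy ih
  rw [← psRename_psRename, ih, hswap x y hxy]

end Part4


section Part5
variable {B : Type*} [CommRing B]

def DomSet (r n : ℕ) (m : Fin (n + 1) → ℕ) (s : Finset ((_ : Fin (r + 1)) × Fin (r + 1))) :
    Set (Fin (r + 1) →₀ ℕ) :=
  {e | ∃ f ∈ U0set n r m,
    (∀ t : Fin (r + 1),
      (∑ i ∈ Finset.Iic t, e i) + (s.filter (fun q => q.1 ≤ t)).card ≤ ∑ i ∈ Finset.Iic t, f i)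
    ∧ (∑ i, f i) = (∑ i, e i) + s.card}

lemma sum_single_Iic {r : ℕ} (j : Fin (r + 1)) (k : ℕ) (t : Fin (r + 1)) :
    (∑ i ∈ Finset.Iic t, (Finsupp.single j k : Fin (r+1) →₀ ℕ) i)
      = if j ≤ t then k else 0 := by
  simp only [Finsupp.single_apply]
  rw [Finset.sum_ite_eq]
  simp [Finset.mem_Iic]

lemma sum_single_univ' {r : ℕ} (j : Fin (r + 1)) (k : ℕ) :
    (∑ i : Fin (r + 1), (Finsupp.single j k : Fin (r+1) →₀ ℕ) i) = k := by
  simp only [Finsupp.single_apply]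
  rw [Finset.sum_ite_eq]
  simp

lemma dom_zero {r n : ℕ} {m : Fin (n + 1) → ℕ} {e : Fin (r + 1) →₀ ℕ}
    (he : e ∈ U0set n r m) : e ∈ DomSet r n m ∅ := by
  exact ⟨e, he, fun t => by simp, by simp⟩

lemma dom_step {r n : ℕ} {m : Fin (n + 1) → ℕ} {s : Finset ((_ : Fin (r + 1)) × Fin (r + 1))}
    {q : (_ : Fin (r + 1)) × Fin (r + 1)} (hq12 : q.1 < q.2) (hq : q ∉ s)
    {e e' : Fin (r + 1) →₀ ℕ} {k : ℕ}
    (heq : e' + Finsupp.single q.2 k = e + Finsupp.single q.1 (k + 1))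
    (he' : e' ∈ DomSet r n m s) : e ∈ DomSet r n m (insert q s) := by
  obtain ⟨f, hf, hineq, htot⟩ := he'
  refine ⟨f, hf, ?_, ?_⟩
  · intro t
    have hsum : (∑ i ∈ Finset.Iic t, e' i) + (if q.2 ≤ t then k else 0)
        = (∑ i ∈ Finset.Iic t, e i) + (if q.1 ≤ t then k + 1 else 0) := by
      have := congrArg (fun (v : Fin (r+1) →₀ ℕ) => ∑ i ∈ Finset.Iic t, v i) heq
      simp only [Finsupp.add_apply] at this
      rw [Finset.sum_add_distrib, Finset.sum_add_distrib, sum_single_Iic, sum_single_Iic] at this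
      exact this
    have hcard : ((insert q s).filter (fun q' => q'.1 ≤ t)).card
        = (s.filter (fun q' => q'.1 ≤ t)).card + (if q.1 ≤ t then 1 else 0) := by
      rw [Finset.filter_insert]
      by_cases hqt : q.1 ≤ t
      · rw [if_pos hqt, if_pos hqt, Finset.card_insert_of_notMem
          (fun hc => hq (Finset.mem_of_mem_filter q hc))]
      · rw [if_neg hqt, if_neg hqt, add_zero]
    have h1 := hineq t
    rw [hcard]
    have hq2t : q.2 ≤ t → q.1 ≤ t := fun h => le_of_lt (lt_of_lt_of_le hq12 h)
    by_cases h2 : q.2 ≤ t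
    · rw [if_pos h2] at hsum
      rw [if_pos (hq2t h2)] at hsum
      rw [if_pos (hq2t h2)]
      omega
    · rw [if_neg h2, add_zero] at hsum
      by_cases h1t : q.1 ≤ t
      · rw [if_pos h1t] at hsum; rw [if_pos h1t]; omega
      · rw [if_neg h1t, add_zero] at hsum; rw [if_neg h1t]; omega
  · have hsum : (∑ i, e' i) + k = (∑ i, e i) + (k + 1) := by
      have := congrArg (fun (v : Fin (r+1) →₀ ℕ) => ∑ i : Fin (r+1), v i) heq
      simp only [Finsupp.add_apply] at this
      rw [Finset.sum_add_distrib, Finset.sum_add_distrib, sum_single_univ', sum_single_univ'] at this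
      exact this
    rw [Finset.card_insert_of_notMem hq]
    omega

lemma peel_prod (r n : ℕ) (m : Fin (n + 1) → ℕ)
    (s : Finset ((_ : Fin (r + 1)) × Fin (r + 1))) (hs : ∀ q ∈ s, q.1 < q.2) :
    ∀ h : MvPowerSeries (Fin (r + 1)) B,
      (∀ e, MvPowerSeries.coeff (R := B) e
        (h * ∏ q ∈ s, (MvPowerSeries.X q.1 - MvPowerSeries.X q.2)) ≠ 0 → e ∈ U0set n r m) →
      ∀ e, MvPowerSeries.coeff (R := B) e h ≠ 0 → e ∈ DomSet r n m s := by
  induction s using Finset.induction_on with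
  | empty =>
    intro h hsupp e he
    apply dom_zero
    apply hsupp
    rwa [Finset.prod_empty, mul_one]
  | @insert q s hq ih =>
    intro h hsupp e he
    have hsupp' : ∀ e', MvPowerSeries.coeff (R := B) e'
        ((h * (MvPowerSeries.X q.1 - MvPowerSeries.X q.2))
          * ∏ q' ∈ s, (MvPowerSeries.X q'.1 - MvPowerSeries.X q'.2)) ≠ 0 →
        e' ∈ U0set n r m := by
      intro e' he'
      apply hsupp e'
      rwa [Finset.prod_insert hq, ← mul_assoc]
    have hDs := ih (fun q' hq' => hs q' (Finset.mem_insert_of_mem hq'))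
      (h * (MvPowerSeries.X q.1 - MvPowerSeries.X q.2)) hsupp'
    have hq12 : q.1 < q.2 := hs q (Finset.mem_insert_self q s)
    obtain ⟨k, f', hf', heq⟩ := peel (Fin.ne_of_lt hq12) h hDs e he
    exact dom_step hq12 hq heq hf'

lemma sigma_filter_Iic (r : ℕ) (t : Fin (r + 1)) :
    ((Finset.univ.sigma fun i : Fin (r + 1) => Finset.Ioi i).filter
        (fun q => q.1 ≤ t)) = (Finset.Iic t).sigma (fun i => Finset.Ioi i) := by
  ext q
  simp [Finset.mem_sigma, Finset.mem_filter, Finset.mem_Iic, and_comm]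

lemma card_Ioi_fin (r : ℕ) (i : Fin (r + 1)) : (Finset.Ioi i).card = r - i := by
  rw [Fin.card_Ioi]
  omega

end Part5


section Part6

lemma antitone_topsum {N : ℕ} (a : Fin N → ℕ) (ha : ∀ x y : Fin N, x ≤ y → a y ≤ a x)
    (s : Finset (Fin N)) :
    ∑ i ∈ s, a i ≤ ∑ i ∈ Finset.univ.filter (fun i : Fin N => (i : ℕ) < s.card), a i := by
  induction s using Finset.strongInduction with
  | _ s ih =>
    rcases Finset.eq_empty_or_nonempty s with rfl | hne
    · simp
    · set x := s.max' hne with hx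
      have hxmem : x ∈ s := s.max'_mem hne
      have hcard1 : 1 ≤ s.card := Finset.card_pos.mpr hne
      have hcardle : s.card ≤ (x : ℕ) + 1 := by
        have hsub : s ⊆ Finset.Iic x := fun y hy => Finset.mem_Iic.mpr (s.le_max' y hy)
        calc s.card ≤ (Finset.Iic x).card := Finset.card_le_card hsub
          _ = (x : ℕ) + 1 := by rw [Fin.card_Iic]
      have hlt : s.card - 1 < N := lt_of_le_of_lt (by omega) x.isLt
      have hyx : (⟨s.card - 1, hlt⟩ : Fin N) ≤ x := by
        rw [Fin.le_def]
        exact (by omega : s.card - 1 ≤ (x : ℕ))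
      have hax : a x ≤ a ⟨s.card - 1, hlt⟩ := ha _ x hyx
      have herase := ih (s.erase x) (Finset.erase_ssubset hxmem)
      rw [Finset.card_erase_of_mem hxmem] at herase
      have hsplit : Finset.univ.filter (fun i : Fin N => (i : ℕ) < s.card)
          = insert (⟨s.card - 1, hlt⟩ : Fin N)
            (Finset.univ.filter (fun i : Fin N => (i : ℕ) < s.card - 1)) := by
        ext z
        simp only [Finset.mem_filter, Finset.mem_univ, true_and, Finset.mem_insert, Fin.ext_iff]
        omega
      have hnotmem : (⟨s.card - 1, hlt⟩ : Fin N) ∉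
          Finset.univ.filter (fun i : Fin N => (i : ℕ) < s.card - 1) := by
        simp only [Finset.mem_filter, Finset.mem_univ, true_and]
        omega
      rw [hsplit, Finset.sum_insert hnotmem]
      have hrestore := Finset.sum_erase_add s a hxmem
      omega

lemma strictanti_lb {r : ℕ} (a : Fin (r + 1) → ℕ)
    (ha : ∀ x y : Fin (r + 1), x < y → a y < a x) :
    ∀ x : Fin (r + 1), r - (x : ℕ) ≤ a x := by
  suffices H : ∀ d : ℕ, ∀ x : Fin (r + 1), (x : ℕ) + d = r → d ≤ a x by
    intro x
    exact H (r - (x : ℕ)) x (by omega)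
  intro d
  induction d with
  | zero => intro x _; omega
  | succ d ihd =>
    intro x hx
    have hlt : (x : ℕ) + 1 < r + 1 := by omega
    set x' : Fin (r + 1) := ⟨(x : ℕ) + 1, hlt⟩ with hx'
    have h1 : d ≤ a x' := ihd x' (by simp [hx']; omega)
    have h2 : a x' < a x := ha x x' (by rw [Fin.lt_def]; simp [hx'])
    omega

lemma pigeonhole_m {n r : ℕ} (hr : r ≤ n) (m : Fin (n + 1) → ℕ)
    (hm : ∀ i j : Fin (n + 1), i < j → m j < m i)
    (a : Fin (r + 1) → ℕ) (ha : ∀ x y : Fin (r + 1), x ≤ y → a y ≤ a x)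
    (em : Fin (r + 1) → Fin (n + 1)) (hem : Function.Injective em)
    (f : Fin (r + 1) → ℕ) (ζ : Equiv.Perm (Fin (r + 1))) (hζ : ∀ y, f (ζ y) = a y)
    (hmf : ∀ x, m (em x) ≤ f x) :
    ∀ x : Fin (r + 1), ∀ hx : (x : ℕ) + (n - r) < n + 1,
      m ⟨(x : ℕ) + (n - r), hx⟩ ≤ a x := by
  intro x hx
  by_contra hcon
  push_neg at hcon
  -- every y ≥ x maps via em ∘ ζ into {l | x + (n-r) < l}
  have hmap : ∀ y : Fin (r + 1), x ≤ y → (⟨(x : ℕ) + (n - r), hx⟩ : Fin (n + 1)) < em (ζ y) := by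
    intro y hxy
    have h1 : a y ≤ a x := ha x y hxy
    have h2 : m (em (ζ y)) ≤ a y := by rw [← hζ y]; exact hmf (ζ y)
    have h3 : m (em (ζ y)) < m ⟨(x : ℕ) + (n - r), hx⟩ := by omega
    rcases lt_trichotomy (⟨(x : ℕ) + (n - r), hx⟩ : Fin (n + 1)) (em (ζ y)) with h | h | h
    · exact h
    · rw [h] at h3; omega
    · exact absurd (hm _ _ h) (by omega)
  have hcard := Finset.card_le_card_of_injOn (f := fun y => em (ζ y))
    (s := Finset.Ici x)
    (t := Finset.Ioi (⟨(x : ℕ) + (n - r), hx⟩ : Fin (n + 1)))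
    (fun y hy => Finset.mem_Ioi.mpr (hmap y (Finset.mem_Ici.mp hy)))
    (fun y _ y' _ hyy' => ζ.injective (hem hyy'))
  rw [Fin.card_Ici, Fin.card_Ioi] at hcard
  have hval : ((⟨(x : ℕ) + (n - r), hx⟩ : Fin (n + 1)) : ℕ) = (x : ℕ) + (n - r) := rfl
  rw [hval] at hcard
  have hxr : (x : ℕ) < r + 1 := x.isLt
  omega

end Part6


lemma kostka : ∀ (R : ℕ) (lam w : ℕ → ℕ),
    (∀ x y : ℕ, x ≤ y → lam y ≤ lam x) →
    (∀ x, R < x → lam x = 0) →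
    (∀ v, R < v → w v = 0) →
    (∀ A : Finset ℕ, ∑ v ∈ A, w v ≤ ∑ i ∈ Finset.range A.card, lam i) →
    (∑ v ∈ Finset.range (R + 1), w v = ∑ i ∈ Finset.range (R + 1), lam i) →
    ∃ T : ℕ → ℕ → ℕ,
      (∀ j c c', c ≤ c' → c' < lam j → T j c ≤ T j c') ∧
      (∀ j j' c, j < j' → c < lam j' → T j c < T j' c) ∧
      (∀ j c, c < lam j → j ≤ T j c ∧ T j c ≤ R) ∧
      (∀ v, ∑ j ∈ Finset.range (R + 1),
        ((Finset.range (lam j)).filter (fun c => T j c = v)).card = w v) := by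
  intro R
  induction R with
  | zero =>
    intro lam w hanti hlz hwz hsub htot
    refine ⟨fun _ _ => 0, ?_, ?_, ?_, ?_⟩
    · intro j c c' _ _; exact le_rfl
    · intro j j' c hjj' hc
      exfalso
      have := hlz j' (by omega)
      omega
    · intro j c hc
      have hj0 : j = 0 := by
        by_contra hj
        have := hlz j (by omega)
        omega
      constructor <;> simp [hj0]
    · intro v
      rw [Finset.sum_range_one]
      have h0 := htot
      rw [Finset.sum_range_one, Finset.sum_range_one] at h0
      by_cases hv : v = 0
      · subst hv
        rw [Finset.filter_true_of_mem (fun c _ => rfl)]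
        rw [Finset.card_range]
        omega
      · rw [hwz v (by omega)]
        rw [Finset.filter_false_of_mem (fun c _ => fun h => hv h.symm)]
        simp
  | succ R ih =>
    intro lam w hanti hlz hwz hsub htot
    have F1 : w (R + 1) ≤ lam 0 := by
      have h := hsub {R + 1}
      rw [Finset.sum_singleton, Finset.card_singleton, Finset.sum_range_one] at h
      exact h
    have F2 : lam (R + 1) ≤ w (R + 1) := by
      have h1 := hsub (Finset.range (R + 1))
      rw [Finset.card_range] at h1
      have h2 := htot
      rw [Finset.sum_range_succ (f := w), Finset.sum_range_succ (f := fun i => lam i)] at h2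
      omega
    set lam' : ℕ → ℕ := fun j => lam j - min (w (R+1)) (lam j) + min (w (R+1)) (lam (j + 1))
      with hlam'
    set w' : ℕ → ℕ := fun v => if v = R + 1 then 0 else w v with hw'
    have hB1 : ∀ j, lam' j ≤ lam j := by
      intro j
      have h1 : min (w (R+1)) (lam (j+1)) ≤ min (w (R+1)) (lam j) :=
        min_le_min le_rfl (hanti j (j+1) (by omega))
      have h2 : min (w (R+1)) (lam j) ≤ lam j := min_le_right _ _
      simp only [hlam']
      omega
    have hB2 : ∀ j, lam (j + 1) ≤ lam' j := by
      intro j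
      have h3 : lam (j + 1) ≤ lam j := hanti j (j+1) (by omega)
      simp only [hlam']
      rcases le_total (w (R+1)) (lam (j+1)) with h | h
      · have hm2 : min (w (R+1)) (lam (j+1)) = w (R+1) := min_eq_left h
        have hm1 : min (w (R+1)) (lam j) = w (R+1) := min_eq_left (le_trans h h3)
        omega
      · have hm2 : min (w (R+1)) (lam (j+1)) = lam (j+1) := min_eq_right h
        have hm1 : min (w (R+1)) (lam j) ≤ w (R+1) := min_le_left _ _
        omega
    have h'anti : ∀ x y : ℕ, x ≤ y → lam' y ≤ lam' x := by
      intro x y hxy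
      rcases eq_or_lt_of_le hxy with rfl | h
      · exact le_rfl
      · calc lam' y ≤ lam y := hB1 y
          _ ≤ lam (x + 1) := hanti (x+1) y (by omega)
          _ ≤ lam' x := hB2 x
    have h'zero : ∀ x, R < x → lam' x = 0 := by
      intro x hx
      have h1 : lam (x + 1) = 0 := hlz _ (by omega)
      have hlxE : lam x ≤ w (R+1) := by
        by_cases hx1 : x = R + 1
        · rw [hx1]; exact F2
        · rw [hlz x (by omega)]; omega
      have hminxx : min (w (R+1)) (lam x) = lam x := min_eq_right hlxE
      simp only [hlam', h1, hminxx]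
      simp
    have htel : ∀ K, (∑ j ∈ Finset.range K, lam' j) + min (w (R+1)) (lam 0)
        = (∑ j ∈ Finset.range K, lam j) + min (w (R+1)) (lam K) := by
      intro K
      induction K with
      | zero => simp
      | succ K ihK =>
        rw [Finset.sum_range_succ, Finset.sum_range_succ]
        have h1 : min (w (R+1)) (lam K) ≤ lam K := min_le_right _ _
        have h2 : lam' K + min (w (R+1)) (lam K) = lam K + min (w (R+1)) (lam (K+1)) := by
          simp only [hlam']
          omega
        omega
    have hw'sum : ∀ (s : Finset ℕ), (R + 1) ∉ s → ∑ v ∈ s, w' v = ∑ v ∈ s, w v := by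
      intro s hs
      apply Finset.sum_congr rfl
      intro v hv
      simp only [hw']
      by_cases hc : v = R + 1
      · exact absurd (hc ▸ hv) hs
      · rw [if_neg hc]
    have htot' : ∑ v ∈ Finset.range (R + 1), w' v = ∑ j ∈ Finset.range (R + 1), lam' j := by
      have h1 := htel (R + 1)
      have h2 : min (w (R+1)) (lam (R + 1)) = lam (R + 1) := min_eq_right F2
      have h3 : min (w (R+1)) (lam 0) = w (R+1) := min_eq_left F1
      have h4 : ∑ v ∈ Finset.range (R + 1), w' v = ∑ v ∈ Finset.range (R + 1), w v :=
        hw'sum _ (by simp)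
      have h5 := htot
      rw [Finset.sum_range_succ (f := w), Finset.sum_range_succ (f := fun i => lam i)] at h5
      omega
    have hw'z : ∀ v, R < v → w' v = 0 := by
      intro v hv
      simp only [hw']
      by_cases h : v = R + 1
      · rw [if_pos h]
      · rw [if_neg h]; exact hwz v (by omega)
    have hsub' : ∀ A : Finset ℕ, ∑ v ∈ A, w' v ≤ ∑ i ∈ Finset.range A.card, lam' i := by
      intro A
      have hstep1 : ∑ v ∈ A, w' v = ∑ v ∈ A.erase (R + 1), w v := by
        by_cases hmem : R + 1 ∈ A
        · have := Finset.sum_erase_add A w' hmem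
          have hz : w' (R + 1) = 0 := by simp [hw']
          rw [hz, add_zero] at this
          rw [← this, hw'sum (A.erase (R + 1)) (Finset.notMem_erase _ _)]
        · rw [Finset.erase_eq_of_notMem hmem]
          exact hw'sum A (by exact hmem)
      have hcardA' : (A.erase (R + 1)).card ≤ A.card := Finset.card_le_card (Finset.erase_subset _ _)
      have hmono : ∑ i ∈ Finset.range (A.erase (R + 1)).card, lam' i ≤ ∑ i ∈ Finset.range A.card, lam' i :=
        Finset.sum_le_sum_of_subset (Finset.range_subset_range.mpr hcardA')
      have hmain : ∑ v ∈ A.erase (R + 1), w v ≤ ∑ i ∈ Finset.range (A.erase (R + 1)).card, lam' i := by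
        have h1 := htel (A.erase (R + 1)).card
        have h3 : min (w (R+1)) (lam 0) = w (R+1) := min_eq_left F1
        rcases le_total (w (R+1)) (lam (A.erase (R + 1)).card) with h | h
        · have h2 : min (w (R+1)) (lam (A.erase (R + 1)).card) = w (R+1) := min_eq_left h
          have h4 := hsub (A.erase (R + 1))
          omega
        · have h2 : min (w (R+1)) (lam (A.erase (R + 1)).card) = lam (A.erase (R + 1)).card := min_eq_right h
          have h4 := hsub (insert (R + 1) (A.erase (R + 1)))
          rw [Finset.sum_insert (Finset.notMem_erase _ _),
            Finset.card_insert_of_notMem (Finset.notMem_erase _ _),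
            Finset.sum_range_succ] at h4
          omega
      omega
    obtain ⟨T', hT'row, hT'col, hT'bd, hT'wt⟩ := ih lam' w' h'anti h'zero hw'z hsub' htot'
    refine ⟨fun j c => if c < lam' j then T' j c else R + 1, ?_, ?_, ?_, ?_⟩
    · intro j c c' hcc' hc'
      dsimp only
      by_cases h1 : c' < lam' j
      · rw [if_pos (lt_of_le_of_lt (by exact_mod_cast hcc') h1), if_pos h1]
        exact hT'row j c c' hcc' h1
      · rw [if_neg h1]
        by_cases h2 : c < lam' j
        · rw [if_pos h2]
          have := (hT'bd j c h2).2
          omega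
        · rw [if_neg h2]
    · intro j j' c hjj' hc
      dsimp only
      by_cases h1 : c < lam' j'
      · have h0 : c < lam' j := by
          have ha1 := hB1 j'
          have ha2 := hanti (j + 1) j' (by omega)
          have ha3 := hB2 j
          omega
        rw [if_pos h0, if_pos h1]
        exact hT'col j j' c hjj' h1
      · rw [if_neg h1]
        by_cases h2 : c < lam' j
        · rw [if_pos h2]
          have := (hT'bd j c h2).2
          omega
        · exfalso
          have ha2 := hanti (j + 1) j' (by omega)
          have ha3 := hB2 j
          omega
    · intro j c hc
      dsimp only
      by_cases h : c < lam' j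
      · rw [if_pos h]
        have := hT'bd j c h
        omega
      · rw [if_neg h]
        constructor
        · by_contra hj
          push_neg at hj
          rw [hlz j hj] at hc
          omega
        · exact le_rfl
    · intro v
      dsimp only
      by_cases hv : v ≤ R
      · have hset : ∀ j, ((Finset.range (lam j)).filter
            (fun c => (if c < lam' j then T' j c else R + 1) = v)).card
            = ((Finset.range (lam' j)).filter (fun c => T' j c = v)).card := by
          intro j
          congr 1
          ext c
          simp only [Finset.mem_filter, Finset.mem_range]
          constructor
          · rintro ⟨h1, h2⟩
            by_cases hcl : c < lam' j
            · rw [if_pos hcl] at h2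
              exact ⟨hcl, h2⟩
            · rw [if_neg hcl] at h2
              omega
          · rintro ⟨h1, h2⟩
            have := hB1 j
            refine ⟨by omega, ?_⟩
            rw [if_pos h1]
            exact h2
        rw [Finset.sum_congr rfl (fun j _ => hset j)]
        rw [Finset.sum_range_succ]
        rw [h'zero (R + 1) (by omega)]
        simp only [Finset.range_zero, Finset.filter_empty, Finset.card_empty, add_zero]
        rw [hT'wt v]
        simp only [hw']
        rw [if_neg (by omega)]
      · push_neg at hv
        by_cases hv1 : v = R + 1
        · subst hv1
          have hcnt : ∀ j, ((Finset.range (lam j)).filter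
              (fun c => (if c < lam' j then T' j c else R + 1) = R + 1)).card
              = lam j - lam' j := by
            intro j
            have hseteq : (Finset.range (lam j)).filter
                (fun c => (if c < lam' j then T' j c else R + 1) = R + 1)
                = (Finset.range (lam j)).filter (fun c => ¬ c < lam' j) := by
              ext c
              simp only [Finset.mem_filter, Finset.mem_range]
              constructor
              · rintro ⟨h1, h2⟩
                refine ⟨h1, ?_⟩
                intro hclt
                rw [if_pos hclt] at h2
                have := (hT'bd j c hclt).2
                omega
              · rintro ⟨h1, h2⟩
                exact ⟨h1, by rw [if_neg h2]⟩
            rw [hseteq]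
            have hfil : (Finset.range (lam j)).filter (fun c => c < lam' j)
                = Finset.range (lam' j) := by
              ext c
              simp only [Finset.mem_filter, Finset.mem_range]
              have := hB1 j
              constructor
              · rintro ⟨h1, h2⟩; exact h2
              · intro h1; exact ⟨by omega, h1⟩
            rw [Finset.filter_not, hfil, Finset.card_sdiff_of_subset (by
              rw [← hfil]; exact Finset.filter_subset _ _),
              Finset.card_range, Finset.card_range]
          rw [Finset.sum_congr rfl (fun j _ => hcnt j)]
          have h1 : (∑ j ∈ Finset.range (R + 1 + 1), (lam j - lam' j))
              + ∑ j ∈ Finset.range (R + 1 + 1), lam' j = ∑ j ∈ Finset.range (R + 1 + 1), lam j := by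
            rw [← Finset.sum_add_distrib]
            apply Finset.sum_congr rfl
            intro j _
            have := hB1 j
            omega
          have h2 : ∑ j ∈ Finset.range (R + 1 + 1), lam' j
              = ∑ j ∈ Finset.range (R + 1), lam' j := by
            rw [Finset.sum_range_succ, h'zero (R + 1) (by omega), add_zero]
          have h3 := htot'
          have h4 : ∑ u ∈ Finset.range (R + 1), w' u = ∑ u ∈ Finset.range (R + 1), w u :=
            hw'sum _ (by simp)
          have h5 := htot
          rw [Finset.sum_range_succ (f := w)] at h5
          omega
        · have hzz : ∀ j ∈ Finset.range (R + 1 + 1), ((Finset.range (lam j)).filter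
              (fun c => (if c < lam' j then T' j c else R + 1) = v)).card = 0 := by
            intro j _
            rw [Finset.card_eq_zero, Finset.filter_eq_empty_iff]
            intro c _
            by_cases h : c < lam' j
            · rw [if_pos h]
              have := (hT'bd j c h).2
              omega
            · rw [if_neg h]
              omega
          rw [Finset.sum_congr rfl hzz, Finset.sum_const, smul_eq_mul, mul_zero,
            hwz v (by omega)]


section Part8

noncomputable def Tset (n : ℕ) (μ : YoungDiagram) : Finset (μ.cells → Fin (n + 1)) :=
  Finset.univ.filter
      (fun T : μ.cells → Fin (n + 1) =>
        (∀ c c' : μ.cells, (c : ℕ × ℕ).1 = (c' : ℕ × ℕ).1 →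
          (c : ℕ × ℕ).2 ≤ (c' : ℕ × ℕ).2 → T c ≤ T c') ∧
        (∀ c c' : μ.cells, (c : ℕ × ℕ).2 = (c' : ℕ × ℕ).2 →
          (c : ℕ × ℕ).1 < (c' : ℕ × ℕ).1 → T c < T c'))

noncomputable def rwt (n r : ℕ) (μ : YoungDiagram) (T : μ.cells → Fin (n + 1)) :
    Fin (r + 1) →₀ ℕ :=
  ∑ c : μ.cells, if h : (T c : ℕ) < r + 1
    then Finsupp.single (⟨(T c : ℕ), h⟩ : Fin (r + 1)) 1 else 0

lemma prod_monomial_one {σ R ι : Type*} [CommSemiring R] (s : Finset ι) (g : ι → (σ →₀ ℕ)) :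
    ∏ c ∈ s, MvPolynomial.monomial (g c) (1 : R) = MvPolynomial.monomial (∑ c ∈ s, g c) 1 := by
  classical
  induction s using Finset.cons_induction with
  | empty => simp
  | cons a s ha ih =>
    rw [Finset.prod_cons, Finset.sum_cons, ih, MvPolynomial.monomial_mul, one_mul]

lemma specializeLast_schurPoly (n r : ℕ) (μ : YoungDiagram) :
    specializeLast n r (schurPoly n μ)
      = ∑ T ∈ Tset n μ, MvPolynomial.monomial (rwt n r μ T) (1 : ℤ) := by
  rw [schurPoly, map_sum]
  apply Finset.sum_congr rfl
  intro T _
  rw [map_prod]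
  have hfac : ∀ c : μ.cells, specializeLast n r (X (T c))
      = MvPolynomial.monomial (if h : (T c : ℕ) < r + 1
          then Finsupp.single (⟨(T c : ℕ), h⟩ : Fin (r + 1)) 1 else 0) (1 : ℤ) := by
    intro c
    rw [specializeLast, aeval_X]
    by_cases h : (T c : ℕ) < r + 1
    · rw [dif_pos h, dif_pos h]
      rfl
    · rw [dif_neg h, dif_neg h]
      rw [MvPolynomial.monomial_zero', MvPolynomial.C_1]
  rw [Finset.prod_congr rfl (fun c _ => hfac c), prod_monomial_one]
  rfl

lemma rwt_mem_support (n r : ℕ) (μ : YoungDiagram) (T₀ : μ.cells → Fin (n + 1))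
    (hT₀ : T₀ ∈ Tset n μ) :
    rwt n r μ T₀ ∈ (specializeLast n r (schurPoly n μ)).support := by
  rw [MvPolynomial.mem_support_iff, specializeLast_schurPoly]
  rw [MvPolynomial.coeff_sum]
  have hterm : ∀ T ∈ Tset n μ, MvPolynomial.coeff (rwt n r μ T₀)
      (MvPolynomial.monomial (rwt n r μ T) (1 : ℤ))
      = if rwt n r μ T = rwt n r μ T₀ then 1 else 0 := by
    intro T _
    rw [MvPolynomial.coeff_monomial]
  rw [Finset.sum_congr rfl hterm]
  have hpos : (0 : ℤ) < ∑ T ∈ Tset n μ, if rwt n r μ T = rwt n r μ T₀ then 1 else 0 := by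
    apply Finset.sum_pos' (fun T _ => by positivity)
    exact ⟨T₀, hT₀, by rw [if_pos rfl]; omega⟩
  omega

lemma rwt_apply (n r : ℕ) (μ : YoungDiagram) (T : μ.cells → Fin (n + 1)) (x : Fin (r + 1)) :
    rwt n r μ T x = (Finset.univ.filter (fun c : μ.cells => (T c : ℕ) = (x : ℕ))).card := by
  rw [rwt, Finsupp.finset_sum_apply, Finset.card_filter]
  apply Finset.sum_congr rfl
  intro c _
  by_cases h : (T c : ℕ) < r + 1
  · rw [dif_pos h]
    rw [Finsupp.single_apply]
    by_cases hx : (T c : ℕ) = (x : ℕ)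
    · rw [if_pos hx, if_pos (Fin.ext hx : (⟨(T c : ℕ), h⟩ : Fin (r+1)) = x)]
    · rw [if_neg hx, if_neg (show ¬ (⟨(T c : ℕ), h⟩ : Fin (r+1)) = x from
        fun hc => hx (congrArg Fin.val hc))]
  · rw [dif_neg h]
    rw [if_neg (fun hc : (T c : ℕ) = (x : ℕ) => h (by omega))]
    rfl

lemma build_tableau (n r : ℕ) (hr : r ≤ n) (μ : YoungDiagram)
    (hμ' : ∀ l : ℕ, n + 1 ≤ l → μ.rowLen l = 0)
    (lamN : ℕ → ℕ) (T' : ℕ → ℕ → ℕ)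
    (hT'row : ∀ j c c', c ≤ c' → c' < lamN j → T' j c ≤ T' j c')
    (hT'col : ∀ j j' c, j < j' → c < lamN j' → T' j c < T' j' c)
    (hT'bd : ∀ j c, c < lamN j → j ≤ T' j c ∧ T' j c ≤ r)
    (hklam : ∀ j, μ.rowLen (j + (n - r)) ≤ lamN j) :
    ∃ T ∈ Tset n μ, ∀ x : Fin (r + 1),
      rwt n r μ T x ≤ ∑ j ∈ Finset.range (r + 1),
        ((Finset.range (lamN j)).filter (fun c => T' j c = (x : ℕ))).card := by
  classical
  have hcell : ∀ c : μ.cells, ((c : ℕ × ℕ).1, (c : ℕ × ℕ).2) ∈ μ := by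
    intro c
    have := c.2
    rw [YoungDiagram.mem_cells] at this
    simpa using this
  have hcolLen_le : ∀ c2 : ℕ, μ.colLen c2 ≤ n + 1 := by
    intro c2
    by_contra hc
    push_neg at hc
    have : (n + 1, c2) ∈ μ := YoungDiagram.mem_iff_lt_colLen.mpr (by omega)
    rw [YoungDiagram.mem_iff_lt_rowLen, hμ' (n+1) le_rfl] at this
    omega
  have hbump : ∀ j c2 : ℕ, (j, c2) ∈ μ → ¬ c2 < μ.rowLen (j + (n - r)) →
      r + 1 ≤ n + 1 + j - μ.colLen c2 ∧ n + 1 + j - μ.colLen c2 ≤ n := by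
    intro j c2 hmem hnk
    have h1 : j < μ.colLen c2 := YoungDiagram.mem_iff_lt_colLen.mp hmem
    have h2 : μ.colLen c2 ≤ j + (n - r) := by
      by_contra hc
      push_neg at hc
      have : (j + (n - r), c2) ∈ μ := YoungDiagram.mem_iff_lt_colLen.mpr hc
      rw [YoungDiagram.mem_iff_lt_rowLen] at this
      omega
    have h3 := hcolLen_le c2
    omega
  have hkept_le : ∀ j c2 : ℕ, c2 < μ.rowLen (j + (n - r)) → T' j c2 ≤ r := by
    intro j c2 hk
    exact (hT'bd j c2 (lt_of_lt_of_le hk (hklam j))).2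
  -- the tableau
  set vfun : μ.cells → ℕ := fun c =>
    if (c : ℕ × ℕ).2 < μ.rowLen ((c : ℕ × ℕ).1 + (n - r))
    then T' (c : ℕ × ℕ).1 (c : ℕ × ℕ).2
    else n + 1 + (c : ℕ × ℕ).1 - μ.colLen (c : ℕ × ℕ).2 with hvfun
  have hvlt : ∀ c : μ.cells, vfun c < n + 1 := by
    intro c
    simp only [hvfun]
    by_cases h : (c : ℕ × ℕ).2 < μ.rowLen ((c : ℕ × ℕ).1 + (n - r))
    · rw [if_pos h]
      have := hkept_le _ _ h
      omega
    · rw [if_neg h]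
      have := hbump _ _ (hcell c) h
      omega
  set T : μ.cells → Fin (n + 1) := fun c => ⟨vfun c, hvlt c⟩ with hT
  have hTval : ∀ c : μ.cells, (T c : ℕ) = vfun c := fun c => rfl
  -- facts about kept cells
  have hkept_val : ∀ c : μ.cells, (c : ℕ × ℕ).2 < μ.rowLen ((c : ℕ × ℕ).1 + (n - r)) →
      (T c : ℕ) = T' (c : ℕ × ℕ).1 (c : ℕ × ℕ).2 := by
    intro c h
    rw [hTval]
    simp only [hvfun]
    rw [if_pos h]
  have hbump_val : ∀ c : μ.cells, ¬ (c : ℕ × ℕ).2 < μ.rowLen ((c : ℕ × ℕ).1 + (n - r)) →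
      (T c : ℕ) = n + 1 + (c : ℕ × ℕ).1 - μ.colLen (c : ℕ × ℕ).2 := by
    intro c h
    rw [hTval]
    simp only [hvfun]
    rw [if_neg h]
  refine ⟨T, ?_, ?_⟩
  · rw [Tset, Finset.mem_filter]
    refine ⟨Finset.mem_univ _, ?_, ?_⟩
    · -- rows
      intro c c' h1 h2
      rw [Fin.le_def]
      by_cases hk' : (c' : ℕ × ℕ).2 < μ.rowLen ((c' : ℕ × ℕ).1 + (n - r))
      · have hk : (c : ℕ × ℕ).2 < μ.rowLen ((c : ℕ × ℕ).1 + (n - r)) := by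
          rw [h1]; omega
        rw [hkept_val c hk, hkept_val c' hk']
        rw [h1]
        exact hT'row _ _ _ h2 (lt_of_lt_of_le hk' (hklam _))
      · rw [hbump_val c' hk']
        by_cases hk : (c : ℕ × ℕ).2 < μ.rowLen ((c : ℕ × ℕ).1 + (n - r))
        · rw [hkept_val c hk]
          have hb := hbump _ _ (hcell c') hk'
          have := hkept_le _ _ hk
          omega
        · rw [hbump_val c hk]
          have hb := hbump _ _ (hcell c') hk'
          have hb2 := hbump _ _ (hcell c) hk
          have hmono : μ.colLen (c' : ℕ × ℕ).2 ≤ μ.colLen (c : ℕ × ℕ).2 :=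
            μ.colLen_anti _ _ h2
          have h1' := YoungDiagram.mem_iff_lt_colLen.mp (hcell c)
          omega
    · -- columns
      intro c c' h1 h2
      rw [Fin.lt_def]
      by_cases hk' : (c' : ℕ × ℕ).2 < μ.rowLen ((c' : ℕ × ℕ).1 + (n - r))
      · have hk : (c : ℕ × ℕ).2 < μ.rowLen ((c : ℕ × ℕ).1 + (n - r)) := by
          rw [h1]
          exact lt_of_lt_of_le hk' (μ.rowLen_anti _ _ (by omega))
        rw [hkept_val c hk, hkept_val c' hk']
        rw [h1]
        exact hT'col _ _ _ h2 (lt_of_lt_of_le hk' (hklam _))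
      · rw [hbump_val c' hk']
        by_cases hk : (c : ℕ × ℕ).2 < μ.rowLen ((c : ℕ × ℕ).1 + (n - r))
        · rw [hkept_val c hk]
          have hb := hbump _ _ (hcell c') hk'
          have := hkept_le _ _ hk
          omega
        · rw [hbump_val c hk]
          have hb := hbump _ _ (hcell c') hk'
          have hb2 := hbump _ _ (hcell c) hk
          have h1c := YoungDiagram.mem_iff_lt_colLen.mp (hcell c)
          have h1c' := YoungDiagram.mem_iff_lt_colLen.mp (hcell c')
          have hle := hcolLen_le (c' : ℕ × ℕ).2
          rw [h1]
          rw [h1] at h1c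
          omega
  · -- weight bound
    intro x
    rw [rwt_apply]
    have hcard : (∑ j ∈ Finset.range (r + 1),
        ((Finset.range (lamN j)).filter (fun c => T' j c = (x : ℕ))).card)
        = ((Finset.range (r + 1)).sigma (fun j =>
            (Finset.range (lamN j)).filter (fun c => T' j c = (x : ℕ)))).card := by
      rw [Finset.card_sigma]
    rw [hcard]
    apply Finset.card_le_card_of_injOn (fun c => ⟨(c : ℕ × ℕ).1, (c : ℕ × ℕ).2⟩)
    · intro c hc
      rw [Finset.mem_coe, Finset.mem_filter] at hc
      have hval := hc.2
      -- value = x ≤ r, so the cell is kept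
      have hxr : (x : ℕ) < r + 1 := x.isLt
      have hk : (c : ℕ × ℕ).2 < μ.rowLen ((c : ℕ × ℕ).1 + (n - r)) := by
        by_contra hnk
        have hb := hbump _ _ (hcell c) hnk
        rw [hbump_val c hnk] at hval
        omega
      rw [hkept_val c hk] at hval
      rw [Finset.mem_coe, Finset.mem_sigma, Finset.mem_filter, Finset.mem_range, Finset.mem_range]
      have hjle : (c : ℕ × ℕ).1 ≤ r := by
        by_contra hj
        push_neg at hj
        have : μ.rowLen ((c : ℕ × ℕ).1 + (n - r)) = 0 := hμ' _ (by omega)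
        omega
      refine ⟨?_, ?_, ?_⟩
      · show ((c : ℕ × ℕ).1) < r + 1
        omega
      · show ((c : ℕ × ℕ).2) < lamN ((c : ℕ × ℕ).1)
        exact lt_of_lt_of_le hk (hklam _)
      · show T' ((c : ℕ × ℕ).1) ((c : ℕ × ℕ).2) = (x : ℕ)
        exact hval
    · intro c _ c' _ hcc'
      have h1 : (c : ℕ × ℕ).1 = (c' : ℕ × ℕ).1 ∧ (c : ℕ × ℕ).2 = (c' : ℕ × ℕ).2 := by
        have := Sigma.mk.inj_iff.mp hcc'
        exact ⟨this.1, by simpa using this.2⟩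
      apply Subtype.ext
      apply Prod.ext h1.1 h1.2

end Part8


/-- If the vanishing orders `m_i = ord_t(p_i)` are strictly decreasing, then
the cofactor `g` with `det M = g ⬝ ∏_{i<j}(x_i - x_j)` lies in the ideal of
`B[[x_0,…,x_r]]` generated by the monomials of `σ_m(x_0,…,x_r,1,…,1)`. -/
theorem stmt5 {B : Type*} [CommRing B] (n r : ℕ) (hr : r ≤ n)
    (p : Fin (n + 1) → PowerSeries B)
    (M : Matrix (Fin (n + 1)) (Fin (n + 1)) (MvPowerSeries (Fin (r + 1)) B))
    (hrows : ∀ i : Fin (n + 1), ∀ h : (i : ℕ) < r + 1, ∀ j : Fin (n + 1),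
      M i j = evalAtVar (⟨(i : ℕ), h⟩ : Fin (r + 1)) (p j))
    (hconst : ∀ i : Fin (n + 1), r + 1 ≤ (i : ℕ) → ∀ j : Fin (n + 1),
      ∃ b : B, M i j = MvPowerSeries.C (σ := Fin (r + 1)) (R := B) b)
    (m : Fin (n + 1) → ℕ)
    (hm : ∀ i j : Fin (n + 1), i < j → m j < m i)
    (hord : ∀ i : Fin (n + 1), (p i).order = (m i : ℕ∞))
    (μ : YoungDiagram)
    (hμ : ∀ i : Fin (n + 1), μ.rowLen i = m i - (n - (i : ℕ)))
    (hμ' : ∀ l : ℕ, n + 1 ≤ l → μ.rowLen l = 0)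
    (g : MvPowerSeries (Fin (r + 1)) B)
    (hg : M.det = g * ∏ i : Fin (r + 1), ∏ j ∈ Finset.Ioi i,
      (MvPowerSeries.X i - MvPowerSeries.X j)) :
    g ∈ Ideal.span { x : MvPowerSeries (Fin (r + 1)) B |
      ∃ d ∈ (specializeLast n r (schurPoly n μ)).support,

        x = ∏ i : Fin (r + 1), (MvPowerSeries.X i) ^ (d i) } := by
  classical
  -- rewrite the generating set in monomial form
  have hsetEq : { x : MvPowerSeries (Fin (r + 1)) B |
      ∃ d ∈ (specializeLast n r (schurPoly n μ)).support,
        x = ∏ i : Fin (r + 1), (MvPowerSeries.X i) ^ (d i) }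
      = { x : MvPowerSeries (Fin (r + 1)) B |
      ∃ d ∈ (specializeLast n r (schurPoly n μ)).support,
        x = MvPowerSeries.monomial (R := B) d 1 } := by
    ext y
    simp only [Set.mem_setOf_eq]
    constructor
    · rintro ⟨d, hd, rfl⟩
      exact ⟨d, hd, prod_X_pow_eq_monomialPS d⟩
    · rintro ⟨d, hd, rfl⟩
      exact ⟨d, hd, (prod_X_pow_eq_monomialPS d).symm⟩
  rw [hsetEq]
  apply mem_span_of_supp_dominated
  intro e he
  -- symmetry of g
  have hsym := g_symm n r hr p M hrows hconst g hg
  -- sorted version of e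
  set ρ : Equiv.Perm (Fin (r + 1)) := Fin.revPerm.trans (Tuple.sort (fun x => e x)) with hρ
  set ebar : Fin (r + 1) →₀ ℕ := (expMap ρ).symm e with hebar
  have hebar_coord : ∀ y, ebar y = e (ρ y) := fun y => expMap_symm_apply_coord ρ e y
  have hρ_apply : ∀ y, ρ y = Tuple.sort (fun x => e x) (Fin.revPerm y) := fun y => rfl
  have hebar_anti : ∀ x y : Fin (r + 1), x ≤ y → ebar y ≤ ebar x := by
    intro x y hxy
    rw [hebar_coord, hebar_coord, hρ_apply, hρ_apply]
    have hrev : Fin.revPerm y ≤ Fin.revPerm x := by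
      simp only [Fin.revPerm_apply]
      exact Fin.rev_le_rev.mpr hxy
    exact Tuple.monotone_sort (fun x => e x) hrev
  have hebar_ne : MvPowerSeries.coeff (R := B) ebar g ≠ 0 := by
    have hc : MvPowerSeries.coeff (R := B) ebar g = MvPowerSeries.coeff (R := B) e g := by
      rw [hebar, ← psRename_coeff ρ g e, hsym ρ]
    rw [hc]
    exact he
  -- the peeling / dominance step
  set Spairs : Finset ((_ : Fin (r + 1)) × Fin (r + 1)) :=
    Finset.univ.sigma (fun i => Finset.Ioi i) with hSp
  have hSp_lt : ∀ q ∈ Spairs, q.1 < q.2 := by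
    intro q hq
    rw [hSp, Finset.mem_sigma] at hq
    exact Finset.mem_Ioi.mp hq.2
  have hU0 : ∀ e', MvPowerSeries.coeff (R := B) e'
      (g * ∏ q ∈ Spairs, (MvPowerSeries.X q.1 - MvPowerSeries.X q.2)) ≠ 0 →
      e' ∈ U0set n r m := by
    intro e' he'
    apply detM_supp n r hr p M hrows hconst m hord e'
    rw [hg, V_as_sigma, ← hSp]
    exact he'
  have hDom := peel_prod r n m Spairs hSp_lt g hU0 ebar hebar_ne
  obtain ⟨f, hfU0, hprefix, htotal⟩ := hDom
  obtain ⟨hfinj, em, hem, hmf⟩ := hfU0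
  -- sort f
  set ζ : Equiv.Perm (Fin (r + 1)) := Fin.revPerm.trans (Tuple.sort (fun x => f x)) with hζ
  set a : Fin (r + 1) → ℕ := fun y => f (ζ y) with ha
  have ha_anti : ∀ x y : Fin (r + 1), x ≤ y → a y ≤ a x := by
    intro x y hxy
    rw [ha]
    simp only
    have hrev : Fin.revPerm y ≤ Fin.revPerm x := by
      simp only [Fin.revPerm_apply]
      exact Fin.rev_le_rev.mpr hxy
    exact Tuple.monotone_sort (fun x => f x) hrev
  have ha_strict : ∀ x y : Fin (r + 1), x < y → a y < a x := by
    intro x y hxy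
    have h1 := ha_anti x y (le_of_lt hxy)
    rcases lt_or_eq_of_le h1 with h | h
    · exact h
    · exfalso
      have : ζ y = ζ x := hfinj h
      exact (ne_of_lt hxy).symm (ζ.injective this)
  have ha_lb := strictanti_lb a ha_strict
  have hma := pigeonhole_m hr m hm a ha_anti em hem (fun x => f x) ζ (fun y => rfl) hmf
  have hma' : ∀ (x : ℕ) (hx : x < r + 1) (hx2 : x + (n - r) < n + 1),
      m ⟨x + (n - r), hx2⟩ ≤ a ⟨x, hx⟩ := by
    intro x hx hx2
    exact hma ⟨x, hx⟩ hx2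
  -- staircase cards
  have hstairs_card : ∀ t : Fin (r + 1),
      (Spairs.filter (fun q => q.1 ≤ t)).card = ∑ i ∈ Finset.Iic t, (r - (i : ℕ)) := by
    intro t
    rw [hSp, sigma_filter_Iic, Finset.card_sigma]
    exact Finset.sum_congr rfl (fun i _ => card_Ioi_fin r i)
  have hScard : Spairs.card = ∑ i : Fin (r + 1), (r - (i : ℕ)) := by
    rw [hSp, Finset.card_sigma]
    exact Finset.sum_congr rfl (fun i _ => card_Ioi_fin r i)
  -- prefix sums of f bounded by sorted prefix sums
  have htop_f : ∀ t : Fin (r + 1), ∑ i ∈ Finset.Iic t, f i ≤ ∑ i ∈ Finset.Iic t, a i := by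
    intro t
    have hinj : Function.Injective (ζ.symm : Fin (r+1) → Fin (r+1)) := ζ.symm.injective
    have h1 : ∑ y ∈ (Finset.Iic t).image ζ.symm, a y = ∑ i ∈ Finset.Iic t, f i := by
      rw [Finset.sum_image (fun x _ y _ h => hinj h)]
      apply Finset.sum_congr rfl
      intro i _
      rw [ha]
      simp only
      rw [Equiv.apply_symm_apply]
    have h2 := antitone_topsum a ha_anti ((Finset.Iic t).image ζ.symm)
    have h3 : ((Finset.Iic t).image ζ.symm).card = (t : ℕ) + 1 := by
      rw [Finset.card_image_of_injective _ hinj, Fin.card_Iic]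
    rw [h3] at h2
    have h4 : Finset.univ.filter (fun i : Fin (r + 1) => (i : ℕ) < (t : ℕ) + 1)
        = Finset.Iic t := by
      ext z
      simp only [Finset.mem_filter, Finset.mem_univ, true_and, Finset.mem_Iic, Fin.le_def]
      omega
    rw [h4] at h2
    rw [← h1]
    exact h2
  -- strict-antitone gap
  have ha_gap : ∀ x y : Fin (r + 1), (x : ℕ) ≤ (y : ℕ) → a y + ((y : ℕ) - (x : ℕ)) ≤ a x := by
    suffices H : ∀ d : ℕ, ∀ x y : Fin (r + 1), (x : ℕ) + d = (y : ℕ) → a y + d ≤ a x by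
      intro x y hxy
      exact H ((y : ℕ) - (x : ℕ)) x y (by omega)
    intro d
    induction d with
    | zero =>
      intro x y hxy
      have : x = y := Fin.ext (by omega)
      subst this
      omega
    | succ d ihd =>
      intro x y hxy
      have hlt : (x : ℕ) + 1 < r + 1 := by
        have := y.isLt
        omega
      have h1 : a y + d ≤ a ⟨(x : ℕ) + 1, hlt⟩ := ihd ⟨(x : ℕ) + 1, hlt⟩ y (by simp; omega)
      have h2 : a ⟨(x : ℕ) + 1, hlt⟩ < a x := ha_strict x _ (by rw [Fin.lt_def]; simp)
      omega
  -- the shape and the content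
  set lamN : ℕ → ℕ := fun x => if h : x < r + 1 then a ⟨x, h⟩ - (r - x) else 0 with hlamN
  set wN : ℕ → ℕ := fun v => if h : v < r + 1 then e ⟨v, h⟩ else 0 with hwN
  have hlam_val : ∀ x : Fin (r + 1), lamN (x : ℕ) = a x - (r - (x : ℕ)) := by
    intro x
    rw [hlamN]
    simp only
    rw [dif_pos x.isLt, Fin.eta]
  have hw_val : ∀ x : Fin (r + 1), wN (x : ℕ) = e x := by
    intro x
    rw [hwN]
    simp only
    rw [dif_pos x.isLt, Fin.eta]
  have hlam_anti : ∀ x y : ℕ, x ≤ y → lamN y ≤ lamN x := by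
    intro x y hxy
    by_cases hy : y < r + 1
    · have hx : x < r + 1 := by omega
      have hcx : ((⟨x, hx⟩ : Fin (r+1)) : ℕ) = x := rfl
      have hcy : ((⟨y, hy⟩ : Fin (r+1)) : ℕ) = y := rfl
      have hgap := ha_gap ⟨x, hx⟩ ⟨y, hy⟩ (by rw [hcx, hcy]; exact hxy)
      rw [hcx, hcy] at hgap
      have hlbx := ha_lb ⟨x, hx⟩
      have hlby := ha_lb ⟨y, hy⟩
      rw [hcx] at hlbx
      rw [hcy] at hlby
      rw [hlamN]
      simp only
      rw [dif_pos hx, dif_pos hy]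
      omega
    · rw [hlamN]
      simp only
      rw [dif_neg hy]
      omega
  have hlam_zero : ∀ x, r < x → lamN x = 0 := by
    intro x hx
    rw [hlamN]
    simp only
    rw [dif_neg (by omega)]
  have hw_zero : ∀ v, r < v → wN v = 0 := by
    intro v hv
    rw [hwN]
    simp only
    rw [dif_neg (by omega)]
  -- conversion between Fin sums and range sums
  have hIic_range : ∀ (G : ℕ → ℕ) (t : Fin (r + 1)),
      ∑ x ∈ Finset.range ((t : ℕ) + 1), G x = ∑ i ∈ Finset.Iic t, G (i : ℕ) := by
    intro G t
    have hr1 : Finset.range ((t : ℕ) + 1) = Finset.Iic (t : ℕ) := by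
      ext z
      simp only [Finset.mem_range, Finset.mem_Iic]
      omega
    rw [hr1, ← Fin.map_valEmbedding_Iic, Finset.sum_map]
    rfl
  -- Σ range(r+1) G = Σ Fin univ
  have huniv_range : ∀ (G : ℕ → ℕ),
      ∑ x ∈ Finset.range (r + 1), G x = ∑ i : Fin (r + 1), G (i : ℕ) :=
    fun G => (Fin.sum_univ_eq_sum_range G (r + 1)).symm
  -- the subset-sum hypothesis for kostka
  have hsplit_a : ∀ (s : Finset (Fin (r+1))),
      (∑ i ∈ s, (a i - (r - (i : ℕ)))) + ∑ i ∈ s, (r - (i : ℕ)) = ∑ i ∈ s, a i := by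
    intro s
    rw [← Finset.sum_add_distrib]
    apply Finset.sum_congr rfl
    intro i _
    have := ha_lb i
    omega
  have hsubN : ∀ A : Finset ℕ, ∑ v ∈ A, wN v ≤ ∑ i ∈ Finset.range A.card, lamN i := by
    intro A
    set Af := A.filter (fun v => v < r + 1) with hAfdef
    have hstep1 : ∑ v ∈ A, wN v = ∑ v ∈ Af, wN v := by
      symm
      apply Finset.sum_subset (Finset.filter_subset _ _)
      intro v hv hnv
      have hvnlt : ¬ v < r + 1 := fun hvlt => hnv (Finset.mem_filter.mpr ⟨hv, hvlt⟩)
      rw [hwN]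
      simp only
      rw [dif_neg hvnlt]
    set s' : Finset (Fin (r + 1)) := Finset.univ.filter (fun y : Fin (r+1) => (y : ℕ) ∈ Af)
      with hs'def
    have hAfim : Af = s'.image (fun y : Fin (r+1) => (y : ℕ)) := by
      ext v
      simp only [Finset.mem_image]
      constructor
      · intro hv
        have hvlt : v < r + 1 := (Finset.mem_filter.mp hv).2
        exact ⟨⟨v, hvlt⟩, Finset.mem_filter.mpr ⟨Finset.mem_univ _, hv⟩, rfl⟩
      · rintro ⟨y, hy, rfl⟩
        exact (Finset.mem_filter.mp hy).2
    have hvalinj : Function.Injective (fun y : Fin (r+1) => (y : ℕ)) := Fin.val_injective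
    have hstep2 : ∑ v ∈ Af, wN v = ∑ y ∈ s', e y := by
      rw [hAfim, Finset.sum_image (fun x _ y _ h => hvalinj h)]
      exact Finset.sum_congr rfl (fun y _ => hw_val y)
    have hcards : s'.card = Af.card := by
      rw [hAfim, Finset.card_image_of_injective _ hvalinj]
    have hAfA : Af.card ≤ A.card := Finset.card_le_card (Finset.filter_subset _ _)
    -- now bound Σ_{s'} e
    have hinjρ : Function.Injective (ρ.symm : Fin (r+1) → Fin (r+1)) := ρ.symm.injective
    have himg : ∑ y ∈ s'.image ρ.symm, ebar y = ∑ y ∈ s', e y := by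
      rw [Finset.sum_image (fun x _ y _ h => hinjρ h)]
      apply Finset.sum_congr rfl
      intro y _
      rw [hebar_coord, Equiv.apply_symm_apply]
    have htop := antitone_topsum ebar hebar_anti (s'.image ρ.symm)
    have hcard2 : (s'.image ρ.symm).card = s'.card :=
      Finset.card_image_of_injective _ hinjρ
    by_cases hc0 : s'.card = 0
    · have : s' = ∅ := Finset.card_eq_zero.mp hc0
      rw [hstep1, hstep2, this]
      simp
    · have hc1 : 1 ≤ s'.card := by omega
      have hcle : s'.card ≤ r + 1 := by
        calc s'.card ≤ Finset.univ.card := Finset.card_le_univ s'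
          _ = r + 1 := by rw [Finset.card_univ, Fintype.card_fin]
      set t : Fin (r + 1) := ⟨s'.card - 1, by omega⟩ with htdef
      have htval : (t : ℕ) = s'.card - 1 := rfl
      have hfilt : Finset.univ.filter (fun i : Fin (r+1) => (i : ℕ) < (s'.image ρ.symm).card)
          = Finset.Iic t := by
        ext z
        simp only [Finset.mem_filter, Finset.mem_univ, true_and, Finset.mem_Iic, Fin.le_def,
          hcard2, htval]
        omega
      rw [hfilt] at htop
      have hpre := hprefix t
      rw [hstairs_card t] at hpre
      have htf := htop_f t
      have hsplitt := hsplit_a (Finset.Iic t)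
      have hconv : ∑ x ∈ Finset.range ((t : ℕ) + 1), lamN x
          = ∑ i ∈ Finset.Iic t, (a i - (r - (i : ℕ))) := by
        rw [hIic_range lamN t]
        apply Finset.sum_congr rfl
        intro i _
        exact hlam_val i
      have hrange_mono : ∑ x ∈ Finset.range ((t : ℕ) + 1), lamN x
          ≤ ∑ x ∈ Finset.range A.card, lamN x := by
        apply Finset.sum_le_sum_of_subset
        apply Finset.range_subset_range.mpr
        omega
      -- chain everything
      rw [hstep1, hstep2, ← himg]
      omega
  have htotN : ∑ v ∈ Finset.range (r + 1), wN v = ∑ i ∈ Finset.range (r + 1), lamN i := by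
    rw [huniv_range wN, huniv_range lamN]
    have h1 : ∑ i : Fin (r + 1), wN (i : ℕ) = ∑ i : Fin (r + 1), e i :=
      Finset.sum_congr rfl (fun i _ => hw_val i)
    have h2 : ∑ i : Fin (r + 1), lamN (i : ℕ) = ∑ i : Fin (r + 1), (a i - (r - (i : ℕ))) :=
      Finset.sum_congr rfl (fun i _ => hlam_val i)
    have h3 := hsplit_a Finset.univ
    have h4 : ∑ i : Fin (r + 1), a i = ∑ i : Fin (r + 1), f i := by
      rw [ha]
      exact Equiv.sum_comp ζ f
    have h5 : ∑ i : Fin (r + 1), e (ρ i) = ∑ i : Fin (r + 1), e i := Equiv.sum_comp ρ e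
    have h6 : ∑ i : Fin (r + 1), ebar i = ∑ i : Fin (r + 1), e i := by
      rw [← h5]
      exact Finset.sum_congr rfl (fun i _ => hebar_coord i)
    rw [h1, h2]
    rw [hScard] at htotal
    omega
  obtain ⟨T', hT'row, hT'col, hT'bd, hT'wt⟩ :=
    kostka r lamN wN hlam_anti hlam_zero hw_zero hsubN htotN
  -- κ ≤ lam
  have hklam : ∀ j, μ.rowLen (j + (n - r)) ≤ lamN j := by
    intro j
    by_cases hj : j < r + 1
    · have hidx : j + (n - r) < n + 1 := by omega
      have hμj := hμ ⟨j + (n - r), hidx⟩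
      have hcoe : ((⟨j + (n - r), hidx⟩ : Fin (n + 1)) : ℕ) = j + (n - r) := rfl
      rw [hcoe] at hμj
      have hmaj := hma' j hj hidx
      have hlamj := hlam_val ⟨j, hj⟩
      rw [show ((⟨j, hj⟩ : Fin (r+1)) : ℕ) = j from rfl] at hlamj
      omega
    · rw [hμ' (j + (n - r)) (by omega)]
      omega
  obtain ⟨T, hTmem, hTwt⟩ := build_tableau n r hr μ hμ' lamN T' hT'row hT'col hT'bd hklam
  refine ⟨rwt n r μ T, rwt_mem_support n r μ T hTmem, ?_⟩
  rw [Finsupp.le_def]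
  intro x
  have h1 := hTwt x
  have h2 := hT'wt (x : ℕ)
  have h3 := hw_val x
  omega
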